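/- A finite connected simple graph G is maximally independent of type 3 if and only if G is obtained from the complete graph K₂ by a finite sequence of Henneberg 1 and Henneberg 2 moves. -/

import Mathlib

open SimpleGraph

noncomputable section

/-- The freedom number `f(H) = 2|V(H)| - |E(H)|` of a subgraph. -/
def subFreedom {V : Type} {G : SimpleGraph V} (H : G.Subgraph) : ℤ :=
  2 * (H.verts.ncard : ℤ) - (H.edgeSet.ncard : ℤ)

/-- The freedom number `f(G) = 2|V| - |E|` of a graph. -/
def gFreedom {V : Type} (G : SimpleGraph V) : ℤ :=
  2 * ((Set.univ : Set V).ncard : ℤ) - (G.edgeSet.ncard : ℤ)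

/-- `G` is independent of type 2: every subgraph (with nonempty vertex set)
has freedom number at least 2. -/
def Indep2 {V : Type} (G : SimpleGraph V) : Prop :=
  ∀ H : G.Subgraph, H.verts.Nonempty → 2 ≤ subFreedom H

/-- `G` is maximally independent of type 2. -/
def MaxIndep2 {V : Type} (G : SimpleGraph V) : Prop := Indep2 G ∧ gFreedom G = 2

/-- `G` is independent of type 3: every subgraph with at least one edge
has freedom number at least 3. -/
def Indep3 {V : Type} (G : SimpleGraph V) : Prop :=
  ∀ H : G.Subgraph, H.edgeSet.Nonempty → 3 ≤ subFreedom H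

/-- `G` is maximally independent of type 3. -/
def MaxIndep3 {V : Type} (G : SimpleGraph V) : Prop := Indep3 G ∧ gFreedom G = 3

/-- A Laman graph: connected and maximally independent of type 3. -/
def Laman {V : Type} (G : SimpleGraph V) : Prop := G.Connected ∧ MaxIndep3 G

/-- Henneberg 1 move: `G'` (on vertex type `β`) is obtained from `G` (on `α`)
via the vertex embedding `φ` by adjoining the new vertex `w` joined to the images
of two distinct vertices `a`, `b` of `G`. -/
def Henneberg1Rel {α β : Type} (G : SimpleGraph α) (G' : SimpleGraph β)
    (φ : α ↪ β) (w : β) : Prop :=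
  (∀ y : β, y ∈ Set.range φ ∨ y = w) ∧ w ∉ Set.range φ ∧
  ∃ a b : α, a ≠ b ∧
    ∀ x y : β, G'.Adj x y ↔
      ((∃ c d : α, G.Adj c d ∧ x = φ c ∧ y = φ d) ∨
       (x = w ∧ (y = φ a ∨ y = φ b)) ∨ (y = w ∧ (x = φ a ∨ x = φ b)))

/-- Henneberg 2 move: `G'` is obtained from `G` by breaking the edge `(u,v)` of `G`
at the new vertex `w` and adding an edge from `w` to a third vertex `z`. -/
def Henneberg2Rel {α β : Type} (G : SimpleGraph α) (G' : SimpleGraph β)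
    (φ : α ↪ β) (w : β) : Prop :=
  (∀ y : β, y ∈ Set.range φ ∨ y = w) ∧ w ∉ Set.range φ ∧
  ∃ u v z : α, G.Adj u v ∧ z ≠ u ∧ z ≠ v ∧
    ∀ x y : β, G'.Adj x y ↔
      ((∃ a b : α, G.Adj a b ∧ ¬ (s(a, b) = s(u, v)) ∧ x = φ a ∧ y = φ b) ∨
       (x = w ∧ (y = φ u ∨ y = φ v ∨ y = φ z)) ∨
       (y = w ∧ (x = φ u ∨ x = φ v ∨ x = φ z)))

def finCastSuccEmb (n : ℕ) : Fin n ↪ Fin (n + 1) :=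
  ⟨Fin.castSucc, Fin.castSucc_injective n⟩

/-- `Derived G0 n G` : the graph `G` on `Fin n` is obtained from the base graph `G0`
by a finite sequence of Henneberg 1 and Henneberg 2 moves. -/
inductive Derived {m : ℕ} (G0 : SimpleGraph (Fin m)) : (n : ℕ) → SimpleGraph (Fin n) → Prop
  | base : Derived G0 m G0
  | h1 {n : ℕ} {G : SimpleGraph (Fin n)} {G' : SimpleGraph (Fin (n + 1))} :
      Derived G0 n G → Henneberg1Rel G G' (finCastSuccEmb n) (Fin.last n) →
      Derived G0 (n + 1) G'
  | h2 {n : ℕ} {G : SimpleGraph (Fin n)} {G' : SimpleGraph (Fin (n + 1))} :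
      Derived G0 n G → Henneberg2Rel G G' (finCastSuccEmb n) (Fin.last n) →
      Derived G0 (n + 1) G'

/-! ### Auxiliary development -/

section Aux

/-- vertex support of an edge set -/
def eV {V : Type} (F : Set (Sym2 V)) : Set V := {v | ∃ e ∈ F, v ∈ e}

/-- edge-set form of `Indep3` -/
def Sparse {V : Type} (G : SimpleGraph V) : Prop :=
  ∀ F : Set (Sym2 V), F ⊆ G.edgeSet → F.Nonempty →
    (F.ncard : ℤ) ≤ 2 * ((eV F).ncard : ℤ) - 3

lemma eV_mono {V : Type} {F F' : Set (Sym2 V)} (h : F ⊆ F') : eV F ⊆ eV F' := by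
  rintro v ⟨e, he, hv⟩; exact ⟨e, h he, hv⟩

lemma eV_union {V : Type} (F F' : Set (Sym2 V)) : eV (F ∪ F') = eV F ∪ eV F' := by
  ext v; constructor
  · rintro ⟨e, he | he, hv⟩
    · exact Or.inl ⟨e, he, hv⟩
    · exact Or.inr ⟨e, he, hv⟩
  · rintro (⟨e, he, hv⟩ | ⟨e, he, hv⟩)
    · exact ⟨e, Or.inl he, hv⟩
    · exact ⟨e, Or.inr he, hv⟩

lemma mem_eV {V : Type} {F : Set (Sym2 V)} {v : V} {e : Sym2 V} (he : e ∈ F) (hv : v ∈ e) :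
    v ∈ eV F := ⟨e, he, hv⟩

/-- the subgraph spanned by an edge set -/
def edgeSub {V : Type} (G : SimpleGraph V) (F : Set (Sym2 V)) (hF : F ⊆ G.edgeSet) :
    G.Subgraph where
  verts := eV F
  Adj x y := s(x, y) ∈ F
  adj_sub h := (SimpleGraph.mem_edgeSet G).mp (hF h)
  edge_vert h := ⟨_, h, Sym2.mem_mk_left _ _⟩
  symm := ⟨fun x y h => by rwa [Sym2.eq_swap]⟩

lemma edgeSub_edgeSet {V : Type} (G : SimpleGraph V) (F : Set (Sym2 V)) (hF : F ⊆ G.edgeSet) :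
    (edgeSub G F hF).edgeSet = F := by
  ext e
  induction e with
  | _ x y => exact Iff.rfl

lemma indep3_iff_sparse {V : Type} [Fintype V] (G : SimpleGraph V) :
    Indep3 G ↔ Sparse G := by
  constructor
  · intro h F hF hne
    have h3 := h (edgeSub G F hF) (by rwa [edgeSub_edgeSet])
    rw [subFreedom, edgeSub_edgeSet] at h3
    have hv : (edgeSub G F hF).verts = eV F := rfl
    rw [hv] at h3
    linarith
  · intro h H hne
    have hsub : H.edgeSet ⊆ G.edgeSet := H.edgeSet_subset
    have hb := h H.edgeSet hsub hne
    have hv : eV H.edgeSet ⊆ H.verts := by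
      rintro v ⟨e, he, hv⟩
      induction e with
      | _ x y =>
        rw [SimpleGraph.Subgraph.mem_edgeSet] at he
        rcases Sym2.mem_iff.mp hv with rfl | rfl
        · exact H.edge_vert he
        · exact H.edge_vert he.symm
    have h1 : (eV H.edgeSet).ncard ≤ H.verts.ncard := Set.ncard_le_ncard hv (Set.toFinite _)
    have h2 : ((eV H.edgeSet).ncard : ℤ) ≤ (H.verts.ncard : ℤ) := by exact_mod_cast h1
    rw [subFreedom]
    linarith

lemma maxIndep3_connected {V : Type} [Fintype V] [Nonempty V] {G : SimpleGraph V}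
    (h : MaxIndep3 G) : G.Connected := by
  obtain ⟨hi, hf⟩ := h
  rw [indep3_iff_sparse] at hi
  rw [SimpleGraph.connected_iff]
  refine ⟨?_, inferInstance⟩
  intro x y
  by_contra hxy
  set S : Set V := {v | G.Reachable x v} with hS
  have hxS : x ∈ S := SimpleGraph.Reachable.refl x
  have hyS : y ∉ S := hxy
  have hstep : ∀ a b : V, G.Adj a b → a ∈ S → b ∈ S := fun a b hab ha =>
    SimpleGraph.Reachable.trans ha hab.reachable
  set A : Set (Sym2 V) := {e | e ∈ G.edgeSet ∧ ∀ v ∈ e, v ∈ S} with hA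
  set B : Set (Sym2 V) := G.edgeSet \ A with hB
  have hAE : A ⊆ G.edgeSet := fun e he => he.1
  have hBE : B ⊆ G.edgeSet := fun e he => he.1
  have hAS : eV A ⊆ S := by rintro v ⟨e, he, hv⟩; exact he.2 v hv
  have hBS : eV B ⊆ Sᶜ := by
    rintro v ⟨e, he, hv⟩
    induction e with
    | _ a b =>
      have hab : G.Adj a b := (SimpleGraph.mem_edgeSet G).mp he.1
      have hnot : ¬ (a ∈ S) := by
        intro haS
        exact he.2 ⟨he.1, by
          intro u hu
          rcases Sym2.mem_iff.mp hu with rfl | rfl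
          · exact haS
          · exact hstep _ _ hab haS⟩
      have hnb : ¬ (b ∈ S) := fun hbS => hnot (hstep _ _ hab.symm hbS)
      rcases Sym2.mem_iff.mp hv with rfl | rfl
      · exact hnot
      · exact hnb
  have hcardV : S.ncard + Sᶜ.ncard = Nat.card V :=
    Set.ncard_add_ncard_compl S (Set.toFinite _) (Set.toFinite _)
  have hcardE : B.ncard + A.ncard = G.edgeSet.ncard :=
    Set.ncard_diff_add_ncard_of_subset hAE (Set.toFinite _)
  have hSpos : 1 ≤ S.ncard := Set.ncard_pos (Set.toFinite _) |>.mpr ⟨x, hxS⟩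
  have hScpos : 1 ≤ Sᶜ.ncard := Set.ncard_pos (Set.toFinite _) |>.mpr ⟨y, hyS⟩
  have hbA : (A.ncard : ℤ) ≤ 2 * (S.ncard : ℤ) - 2 := by
    rcases A.eq_empty_or_nonempty with hAe | hAne
    · rw [hAe]
      simp only [Set.ncard_empty, Nat.cast_zero]
      have : (1 : ℤ) ≤ (S.ncard : ℤ) := by exact_mod_cast hSpos
      linarith
    · have := hi A hAE hAne
      have h1 : (eV A).ncard ≤ S.ncard := Set.ncard_le_ncard hAS (Set.toFinite _)
      have h2 : ((eV A).ncard : ℤ) ≤ (S.ncard : ℤ) := by exact_mod_cast h1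
      linarith
  have hbB : (B.ncard : ℤ) ≤ 2 * (Sᶜ.ncard : ℤ) - 2 := by
    rcases B.eq_empty_or_nonempty with hBe | hBne
    · rw [hBe]
      simp only [Set.ncard_empty, Nat.cast_zero]
      have : (1 : ℤ) ≤ (Sᶜ.ncard : ℤ) := by exact_mod_cast hScpos
      linarith
    · have := hi B hBE hBne
      have h1 : (eV B).ncard ≤ Sᶜ.ncard := Set.ncard_le_ncard hBS (Set.toFinite _)
      have h2 : ((eV B).ncard : ℤ) ≤ (Sᶜ.ncard : ℤ) := by exact_mod_cast h1
      linarith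
  rw [gFreedom] at hf
  have huniv : ((Set.univ : Set V).ncard : ℤ) = (S.ncard : ℤ) + (Sᶜ.ncard : ℤ) := by
    rw [Set.ncard_univ]; exact_mod_cast hcardV.symm
  have hE : (G.edgeSet.ncard : ℤ) = (B.ncard : ℤ) + (A.ncard : ℤ) := by exact_mod_cast hcardE.symm
  linarith

end Aux
section Aux2

lemma sparse_of_iso {α β : Type} [Fintype α] [Fintype β] {G : SimpleGraph α}
    {G' : SimpleGraph β} (e : G ≃g G') (h : Sparse G') : Sparse G := by
  intro F hF hne
  set F' : Set (Sym2 β) := Sym2.map (e : α → β) '' F with hF'def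
  have hinj : Function.Injective (Sym2.map (e : α → β)) :=
    Sym2.map.injective e.toEquiv.injective
  have hF' : F' ⊆ G'.edgeSet := by
    rintro _ ⟨e0, he0, rfl⟩
    exact e.toHom.map_mem_edgeSet (hF he0)
  have hcard : F'.ncard = F.ncard := Set.ncard_image_of_injective _ hinj
  have heV : eV F' = (e : α → β) '' eV F := by
    ext v; constructor
    · rintro ⟨e0, ⟨e1, he1, rfl⟩, hv⟩
      rcases Sym2.mem_map.mp hv with ⟨a, ha, rfl⟩
      exact ⟨a, ⟨e1, he1, ha⟩, rfl⟩
    · rintro ⟨a, ⟨e1, he1, ha⟩, rfl⟩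
      exact ⟨Sym2.map _ e1, ⟨e1, he1, rfl⟩, Sym2.mem_map.mpr ⟨a, ha, rfl⟩⟩
  have hr := h F' hF' (hne.image _)
  have himg2 : ((e : α → β) '' eV F).ncard = (eV F).ncard :=
    Set.ncard_image_of_injective _ (RelIso.injective e)
  rw [hcard, heV, himg2] at hr
  exact hr

lemma gFreedom_of_iso {α β : Type} {G : SimpleGraph α} {G' : SimpleGraph β}
    (e : G ≃g G') : gFreedom G = gFreedom G' := by
  rw [gFreedom, gFreedom, Set.ncard_univ, Set.ncard_univ, Nat.card_congr e.toEquiv,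
    ← Nat.card_coe_set_eq, ← Nat.card_coe_set_eq, Nat.card_congr e.mapEdgeSet]

lemma maxIndep3_of_iso {α β : Type} [Fintype α] [Fintype β] {G : SimpleGraph α}
    {G' : SimpleGraph β} (e : G ≃g G') (h : MaxIndep3 G') : MaxIndep3 G :=
  ⟨(indep3_iff_sparse _).mpr (sparse_of_iso e ((indep3_iff_sparse _).mp h.1)),
    (gFreedom_of_iso e).trans h.2⟩

/-- a nonempty set of non-diagonal edges all containing `w` has at least
`|F| + 1` endpoints -/
lemma ncard_eV_w {V : Type} [Fintype V] {F : Set (Sym2 V)} {w : V}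
    (hne : F.Nonempty) (hw : ∀ e ∈ F, w ∈ e) (hnd : ∀ e ∈ F, ¬ e.IsDiag) :
    F.ncard + 1 ≤ (eV F).ncard := by
  classical
  have key : ∀ e ∈ F, ∃ c : V, c ≠ w ∧ e = s(w, c) := by
    intro e he
    exact ⟨Sym2.Mem.other (hw e he), Sym2.other_ne (hnd e he) (hw e he),
      (Sym2.other_spec (hw e he)).symm⟩
  choose c hcne hce using key
  set g : Sym2 V → V := fun e => if h : e ∈ F then c e h else w with hg
  have hginj : Set.InjOn g F := by
    intro e1 h1 e2 h2 hg12
    simp only [hg, dif_pos h1, dif_pos h2] at hg12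
    rw [hce e1 h1, hce e2 h2, hg12]
  have himg : g '' F ⊆ eV F \ {w} := by
    rintro _ ⟨e0, he0, rfl⟩
    simp only [hg, dif_pos he0]
    refine ⟨⟨e0, he0, ?_⟩, hcne e0 he0⟩
    have hm : c e0 he0 ∈ (s(w, c e0 he0) : Sym2 V) := Sym2.mem_mk_right _ _
    rw [← hce e0 he0] at hm
    exact hm
  have h1 : F.ncard = (g '' F).ncard := (Set.ncard_image_of_injOn hginj).symm
  have h2 : (g '' F).ncard ≤ (eV F \ {w}).ncard := Set.ncard_le_ncard himg (Set.toFinite _)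
  have hwmem : w ∈ eV F := by
    obtain ⟨e0, he0⟩ := hne
    exact ⟨e0, he0, hw e0 he0⟩
  have h3 : (eV F \ {w}).ncard + 1 = (eV F).ncard :=
    Set.ncard_diff_singleton_add_one hwmem (Set.toFinite _)
  omega

end Aux2
section Aux3

variable {α β : Type}

lemma w_not_mem_image_edge {φ : α ↪ β} {w : β} (hw : w ∉ Set.range φ)
    {E : Set (Sym2 α)} {e : Sym2 β} (he : e ∈ Sym2.map (φ : α → β) '' E) : w ∉ e := by
  rcases he with ⟨e0, _, rfl⟩
  intro hmem
  rcases Sym2.mem_map.mp hmem with ⟨a, _, ha⟩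
  exact hw ⟨a, ha⟩

lemma cov_natCard [Fintype α] [Fintype β] (φ : α ↪ β) (w : β)
    (hcov : ∀ y : β, y ∈ Set.range φ ∨ y = w) (hw : w ∉ Set.range φ) :
    Nat.card β = Nat.card α + 1 := by
  have huniv : (Set.univ : Set β) = insert w (Set.range φ) := by
    ext y
    simp only [Set.mem_univ, true_iff, Set.mem_insert_iff]
    rcases hcov y with h | h
    · exact Or.inr h
    · exact Or.inl h
  have h1 : (Set.range (φ : α → β)).ncard = Nat.card α := by
    rw [← Set.image_univ, Set.ncard_image_of_injective _ φ.injective, Set.ncard_univ]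
  rw [← Set.ncard_univ, huniv, Set.ncard_insert_of_notMem hw (Set.toFinite _), h1]

lemma h1_edgeSet {G : SimpleGraph α} {G' : SimpleGraph β} {φ : α ↪ β} {w : β} {a b : α}
    (hadj : ∀ x y : β, G'.Adj x y ↔
      ((∃ c d : α, G.Adj c d ∧ x = φ c ∧ y = φ d) ∨
       (x = w ∧ (y = φ a ∨ y = φ b)) ∨ (y = w ∧ (x = φ a ∨ x = φ b)))) :
    G'.edgeSet = (Sym2.map (φ : α → β) '' G.edgeSet) ∪ {s(w, φ a), s(w, φ b)} := by
  ext e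
  induction e with
  | _ x y =>
    rw [SimpleGraph.mem_edgeSet, hadj]
    simp only [Set.mem_union, Set.mem_insert_iff, Set.mem_singleton_iff, Set.mem_image]
    constructor
    · rintro (⟨c, d, hcd, rfl, rfl⟩ | ⟨rfl, (rfl | rfl)⟩ | ⟨rfl, (rfl | rfl)⟩)
      · exact Or.inl ⟨s(c, d), hcd, rfl⟩
      · exact Or.inr (Or.inl rfl)
      · exact Or.inr (Or.inr rfl)
      · exact Or.inr (Or.inl Sym2.eq_swap)
      · exact Or.inr (Or.inr Sym2.eq_swap)
    · rintro (⟨e0, he0, hmap⟩ | (h | h))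
      · induction e0 with
        | _ c d =>
          rw [Sym2.map_pair_eq, Sym2.eq_iff] at hmap
          rcases hmap with ⟨h1, h2⟩ | ⟨h1, h2⟩
          · exact Or.inl ⟨c, d, (SimpleGraph.mem_edgeSet G).mp he0, h1.symm, h2.symm⟩
          · exact Or.inl ⟨d, c, ((SimpleGraph.mem_edgeSet G).mp he0).symm, h2.symm, h1.symm⟩
      · rw [Sym2.eq_iff] at h
        rcases h with ⟨rfl, rfl⟩ | ⟨rfl, rfl⟩
        · exact Or.inr (Or.inl ⟨rfl, Or.inl rfl⟩)
        · exact Or.inr (Or.inr ⟨rfl, Or.inl rfl⟩)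
      · rw [Sym2.eq_iff] at h
        rcases h with ⟨rfl, rfl⟩ | ⟨rfl, rfl⟩
        · exact Or.inr (Or.inl ⟨rfl, Or.inr rfl⟩)
        · exact Or.inr (Or.inr ⟨rfl, Or.inr rfl⟩)

lemma h2_edgeSet {G : SimpleGraph α} {G' : SimpleGraph β} {φ : α ↪ β} {w : β} {u v z : α}
    (hadj : ∀ x y : β, G'.Adj x y ↔
      ((∃ a b : α, G.Adj a b ∧ ¬ (s(a, b) = s(u, v)) ∧ x = φ a ∧ y = φ b) ∨
       (x = w ∧ (y = φ u ∨ y = φ v ∨ y = φ z)) ∨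
       (y = w ∧ (x = φ u ∨ x = φ v ∨ x = φ z)))) :
    G'.edgeSet = (Sym2.map (φ : α → β) '' (G.edgeSet \ {s(u, v)})) ∪
      {s(w, φ u), s(w, φ v), s(w, φ z)} := by
  ext e
  induction e with
  | _ x y =>
    rw [SimpleGraph.mem_edgeSet, hadj]
    simp only [Set.mem_union, Set.mem_insert_iff, Set.mem_singleton_iff, Set.mem_image,
      Set.mem_diff]
    constructor
    · rintro (⟨c, d, hcd, hne, rfl, rfl⟩ | ⟨rfl, (rfl | rfl | rfl)⟩ | ⟨rfl, (rfl | rfl | rfl)⟩)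
      · exact Or.inl ⟨s(c, d), ⟨hcd, hne⟩, rfl⟩
      · exact Or.inr (Or.inl rfl)
      · exact Or.inr (Or.inr (Or.inl rfl))
      · exact Or.inr (Or.inr (Or.inr rfl))
      · exact Or.inr (Or.inl Sym2.eq_swap)
      · exact Or.inr (Or.inr (Or.inl Sym2.eq_swap))
      · exact Or.inr (Or.inr (Or.inr Sym2.eq_swap))
    · rintro (⟨e0, ⟨he0, hne0⟩, hmap⟩ | (h | h | h))
      · induction e0 with
        | _ c d =>
          rw [Sym2.map_pair_eq, Sym2.eq_iff] at hmap
          rcases hmap with ⟨h1, h2⟩ | ⟨h1, h2⟩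
          · exact Or.inl ⟨c, d, (SimpleGraph.mem_edgeSet G).mp he0, hne0, h1.symm, h2.symm⟩
          · refine Or.inl ⟨d, c, ((SimpleGraph.mem_edgeSet G).mp he0).symm, ?_, h2.symm, h1.symm⟩
            rw [Sym2.eq_swap]
            exact hne0
      · rw [Sym2.eq_iff] at h
        rcases h with ⟨rfl, rfl⟩ | ⟨rfl, rfl⟩
        · exact Or.inr (Or.inl ⟨rfl, Or.inl rfl⟩)
        · exact Or.inr (Or.inr ⟨rfl, Or.inl rfl⟩)
      · rw [Sym2.eq_iff] at h
        rcases h with ⟨rfl, rfl⟩ | ⟨rfl, rfl⟩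
        · exact Or.inr (Or.inl ⟨rfl, Or.inr (Or.inl rfl)⟩)
        · exact Or.inr (Or.inr ⟨rfl, Or.inr (Or.inl rfl)⟩)
      · rw [Sym2.eq_iff] at h
        rcases h with ⟨rfl, rfl⟩ | ⟨rfl, rfl⟩
        · exact Or.inr (Or.inl ⟨rfl, Or.inr (Or.inr rfl)⟩)
        · exact Or.inr (Or.inr ⟨rfl, Or.inr (Or.inr rfl)⟩)

end Aux3
section Aux4

variable {α β : Type} [Fintype α] [Fintype β]

lemma wpair_ne {φ : α ↪ β} {w : β} (hw : w ∉ Set.range φ) {a b : α} (hab : a ≠ b) :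
    s(w, φ a) ≠ s(w, φ b) := by
  intro h
  rw [Sym2.eq_iff] at h
  rcases h with ⟨-, h2⟩ | ⟨h1, -⟩
  · exact hab (φ.injective h2)
  · exact hw ⟨b, h1.symm⟩

lemma eV_singleton {V : Type} (a b : V) : eV ({s(a, b)} : Set (Sym2 V)) = {a, b} := by
  ext x
  constructor
  · rintro ⟨e, rfl, hx⟩
    rcases Sym2.mem_iff.mp hx with rfl | rfl
    · exact Or.inl rfl
    · exact Or.inr rfl
  · rintro (rfl | rfl)
    · exact ⟨s(x, b), rfl, Sym2.mem_mk_left _ _⟩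
    · exact ⟨s(a, x), rfl, Sym2.mem_mk_right _ _⟩

lemma h1_maxIndep3 {G : SimpleGraph α} {G' : SimpleGraph β} {φ : α ↪ β} {w : β}
    (hrel : Henneberg1Rel G G' φ w) (h : MaxIndep3 G) : MaxIndep3 G' := by
  classical
  obtain ⟨hcov, hw, a, b, hab, hadj⟩ := hrel
  obtain ⟨hi, hf⟩ := h
  rw [indep3_iff_sparse] at hi
  have hE' := h1_edgeSet hadj
  have hpair_ne : s(w, φ a) ≠ s(w, φ b) := wpair_ne hw hab
  have hdisj : Disjoint (Sym2.map (φ : α → β) '' G.edgeSet)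
      ({s(w, φ a), s(w, φ b)} : Set (Sym2 β)) := by
    rw [Set.disjoint_left]
    intro e he hpq
    rcases hpq with rfl | rfl
    · exact w_not_mem_image_edge hw he (Sym2.mem_mk_left _ _)
    · exact w_not_mem_image_edge hw he (Sym2.mem_mk_left _ _)
  have hcardE' : G'.edgeSet.ncard = G.edgeSet.ncard + 2 := by
    rw [hE', Set.ncard_union_eq hdisj (Set.toFinite _) (Set.toFinite _),
      Set.ncard_image_of_injective _ (Sym2.map.injective φ.injective),
      Set.ncard_pair hpair_ne]
  constructor
  · rw [indep3_iff_sparse]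
    intro F hF hne
    rw [hE'] at hF
    set Fw : Set (Sym2 β) := {e ∈ F | w ∈ e} with hFwdef
    set F0' : Set (Sym2 β) := {e ∈ F | w ∉ e} with hF0'def
    have hsplit : F = Fw ∪ F0' := by
      ext e
      constructor
      · intro he
        by_cases hwe : w ∈ e
        · exact Or.inl ⟨he, hwe⟩
        · exact Or.inr ⟨he, hwe⟩
      · rintro (⟨he, -⟩ | ⟨he, -⟩) <;> exact he
    have hdisj2 : Disjoint Fw F0' := by
      rw [Set.disjoint_left]
      rintro e ⟨-, hwe⟩ ⟨-, hnwe⟩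
      exact hnwe hwe
    have hcardF : F.ncard = Fw.ncard + F0'.ncard := by
      rw [hsplit]
      exact Set.ncard_union_eq hdisj2 (Set.toFinite _) (Set.toFinite _)
    have hF0'img : F0' ⊆ Sym2.map (φ : α → β) '' G.edgeSet := by
      rintro e ⟨heF, hnwe⟩
      rcases hF heF with h | h
      · exact h
      · exfalso
        rcases h with rfl | rfl
        · exact hnwe (Sym2.mem_mk_left _ _)
        · exact hnwe (Sym2.mem_mk_left _ _)
    set F0 : Set (Sym2 α) := {e ∈ G.edgeSet | Sym2.map (φ : α → β) e ∈ F0'} with hF0def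
    have himgF0 : Sym2.map (φ : α → β) '' F0 = F0' := by
      apply Set.Subset.antisymm
      · rintro _ ⟨e0, ⟨-, he0⟩, rfl⟩
        exact he0
      · intro e he
        rcases hF0'img he with ⟨e0, he0, rfl⟩
        exact ⟨e0, ⟨he0, he⟩, rfl⟩
    have hcard0 : F0'.ncard = F0.ncard := by
      rw [← himgF0, Set.ncard_image_of_injective _ (Sym2.map.injective φ.injective)]
    have himgEV : ∀ x ∈ eV F0, φ x ∈ eV F := by
      rintro x ⟨e0, he0, hx⟩
      exact ⟨_, he0.2.1, Sym2.mem_map.mpr ⟨x, hx, rfl⟩⟩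
    have hEVsub : (φ : α → β) '' eV F0 ⊆ eV F := by
      rintro _ ⟨x, hx, rfl⟩
      exact himgEV x hx
    have hs_le : (eV F0).ncard ≤ (eV F).ncard := by
      calc (eV F0).ncard = ((φ : α → β) '' eV F0).ncard :=
            (Set.ncard_image_of_injective _ φ.injective).symm
        _ ≤ _ := Set.ncard_le_ncard hEVsub (Set.toFinite _)
    rcases F0'.eq_empty_or_nonempty with h0 | h0
    · have hwF : ∀ e ∈ F, w ∈ e := by
        intro e he
        by_contra hnwe
        have : e ∈ F0' := ⟨he, hnwe⟩
        rw [h0] at this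
        exact this
      have hnd : ∀ e ∈ F, ¬ e.IsDiag := by
        intro e he
        have : e ∈ G'.edgeSet := by rw [hE']; exact hF he
        exact G'.not_isDiag_of_mem_edgeSet this
      have hkey := ncard_eV_w hne hwF hnd
      have h1 : 0 < F.ncard := Set.ncard_pos (Set.toFinite _) |>.mpr hne
      omega
    · have hF0ne : F0.Nonempty := by
        rcases h0 with ⟨e, he⟩
        rcases hF0'img he with ⟨e0, he0, rfl⟩
        exact ⟨e0, ⟨he0, he⟩⟩
      have hF0sub : F0 ⊆ G.edgeSet := fun e he => he.1
      have hm := hi F0 hF0sub hF0ne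
      rcases Fw.eq_empty_or_nonempty with hFw0 | hFwne
      · rw [hFw0, Set.ncard_empty] at hcardF
        omega
      · have hFwsub : Fw ⊆ {s(w, φ a), s(w, φ b)} := by
          rintro e ⟨heF, hwe⟩
          rcases hF heF with h | h
          · exact absurd hwe (w_not_mem_image_edge hw h)
          · exact h
        have hk : Fw.ncard ≤ 2 := by
          have := Set.ncard_le_ncard hFwsub (Set.toFinite _)
          rwa [Set.ncard_pair hpair_ne] at this
        have hwEV : w ∈ eV F := by
          rcases hFwne with ⟨e, heF, hwe⟩
          exact ⟨e, heF, hwe⟩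
        have hwnotin : w ∉ (φ : α → β) '' eV F0 := by
          rintro ⟨x, -, hx⟩
          exact hw ⟨x, hx⟩
        have hins : insert w ((φ : α → β) '' eV F0) ⊆ eV F := by
          intro x hx
          rcases Set.mem_insert_iff.mp hx with rfl | hx
          · exact hwEV
          · exact hEVsub hx
        have hcnt : (eV F0).ncard + 1 ≤ (eV F).ncard := by
          have hle := Set.ncard_le_ncard hins (Set.toFinite _)
          rw [Set.ncard_insert_of_notMem hwnotin (Set.toFinite _),
            Set.ncard_image_of_injective _ φ.injective] at hle
          exact hle
        omega
  · rw [gFreedom] at hf ⊢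
    have hv : ((Set.univ : Set β).ncard : ℤ) = ((Set.univ : Set α).ncard : ℤ) + 1 := by
      rw [Set.ncard_univ, Set.ncard_univ, cov_natCard φ w hcov hw]
      push_cast
      ring
    have he : (G'.edgeSet.ncard : ℤ) = (G.edgeSet.ncard : ℤ) + 2 := by
      rw [hcardE']
      push_cast
      ring
    rw [hv, he]
    linarith

end Aux4
section Aux5

set_option linter.unusedSectionVars false

variable {α β : Type} [Fintype α] [Fintype β]

lemma h2_maxIndep3 {G : SimpleGraph α} {G' : SimpleGraph β} {φ : α ↪ β} {w : β}
    (hrel : Henneberg2Rel G G' φ w) (h : MaxIndep3 G) : MaxIndep3 G' := by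
  classical
  obtain ⟨hcov, hw, u, v, z, huv, hzu, hzv, hadj⟩ := hrel
  obtain ⟨hi, hf⟩ := h
  rw [indep3_iff_sparse] at hi
  have hE' := h2_edgeSet hadj
  have huvne : u ≠ v := huv.ne
  have h1ne : s(w, φ u) ≠ s(w, φ v) := wpair_ne hw huvne
  have h2ne : s(w, φ u) ≠ s(w, φ z) := wpair_ne hw (Ne.symm hzu)
  have h3ne : s(w, φ v) ≠ s(w, φ z) := wpair_ne hw (Ne.symm hzv)
  set T : Set (Sym2 β) := {s(w, φ u), s(w, φ v), s(w, φ z)} with hTdef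
  have hTw : ∀ e ∈ T, w ∈ e := by
    rintro e (rfl | rfl | rfl) <;> exact Sym2.mem_mk_left _ _
  have hTcard : T.ncard = 3 := by
    rw [hTdef, Set.ncard_insert_of_notMem (by
      rintro (h | h)
      · exact h1ne h
      · exact h2ne h) (Set.toFinite _), Set.ncard_pair h3ne]
  have hdisj : Disjoint (Sym2.map (φ : α → β) '' (G.edgeSet \ {s(u, v)})) T := by
    rw [Set.disjoint_left]
    intro e he hT
    exact w_not_mem_image_edge hw he (hTw e hT)
  have huvE : s(u, v) ∈ G.edgeSet := huv
  have hdelcard : (G.edgeSet \ {s(u, v)}).ncard + 1 = G.edgeSet.ncard :=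
    Set.ncard_diff_singleton_add_one huvE (Set.toFinite _)
  have hcardE' : G'.edgeSet.ncard = G.edgeSet.ncard + 2 := by
    rw [hE', Set.ncard_union_eq hdisj (Set.toFinite _) (Set.toFinite _),
      Set.ncard_image_of_injective _ (Sym2.map.injective φ.injective), hTcard]
    omega
  constructor
  · rw [indep3_iff_sparse]
    intro F hF hne
    rw [hE'] at hF
    set Fw : Set (Sym2 β) := {e ∈ F | w ∈ e} with hFwdef
    set F0' : Set (Sym2 β) := {e ∈ F | w ∉ e} with hF0'def
    have hsplit : F = Fw ∪ F0' := by
      ext e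
      constructor
      · intro he
        by_cases hwe : w ∈ e
        · exact Or.inl ⟨he, hwe⟩
        · exact Or.inr ⟨he, hwe⟩
      · rintro (⟨he, -⟩ | ⟨he, -⟩) <;> exact he
    have hdisj2 : Disjoint Fw F0' := by
      rw [Set.disjoint_left]
      rintro e ⟨-, hwe⟩ ⟨-, hnwe⟩
      exact hnwe hwe
    have hcardF : F.ncard = Fw.ncard + F0'.ncard := by
      rw [hsplit]
      exact Set.ncard_union_eq hdisj2 (Set.toFinite _) (Set.toFinite _)
    have hF0'img : F0' ⊆ Sym2.map (φ : α → β) '' (G.edgeSet \ {s(u, v)}) := by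
      rintro e ⟨heF, hnwe⟩
      rcases hF heF with h | h
      · exact h
      · exact absurd (hTw e h) hnwe
    set F0 : Set (Sym2 α) := {e ∈ G.edgeSet \ {s(u, v)} | Sym2.map (φ : α → β) e ∈ F0'}
      with hF0def
    have himgF0 : Sym2.map (φ : α → β) '' F0 = F0' := by
      apply Set.Subset.antisymm
      · rintro _ ⟨e0, ⟨-, he0⟩, rfl⟩
        exact he0
      · intro e he
        rcases hF0'img he with ⟨e0, he0, rfl⟩
        exact ⟨e0, ⟨he0, he⟩, rfl⟩
    have hcard0 : F0'.ncard = F0.ncard := by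
      rw [← himgF0, Set.ncard_image_of_injective _ (Sym2.map.injective φ.injective)]
    have himgEV : ∀ x ∈ eV F0, φ x ∈ eV F := by
      rintro x ⟨e0, he0, hx⟩
      exact ⟨_, he0.2.1, Sym2.mem_map.mpr ⟨x, hx, rfl⟩⟩
    have hEVsub : (φ : α → β) '' eV F0 ⊆ eV F := by
      rintro _ ⟨x, hx, rfl⟩
      exact himgEV x hx
    have hs_le : (eV F0).ncard ≤ (eV F).ncard := by
      calc (eV F0).ncard = ((φ : α → β) '' eV F0).ncard :=
            (Set.ncard_image_of_injective _ φ.injective).symm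
        _ ≤ _ := Set.ncard_le_ncard hEVsub (Set.toFinite _)
    rcases F0'.eq_empty_or_nonempty with h0 | h0
    · -- all edges of F contain w
      have hwF : ∀ e ∈ F, w ∈ e := by
        intro e he
        by_contra hnwe
        have : e ∈ F0' := ⟨he, hnwe⟩
        rw [h0] at this
        exact this
      have hnd : ∀ e ∈ F, ¬ e.IsDiag := by
        intro e he
        have : e ∈ G'.edgeSet := by rw [hE']; exact hF he
        exact G'.not_isDiag_of_mem_edgeSet this
      have hkey := ncard_eV_w hne hwF hnd
      have h1 : 0 < F.ncard := Set.ncard_pos (Set.toFinite _) |>.mpr hne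
      omega
    · have hF0ne : F0.Nonempty := by
        rcases h0 with ⟨e, he⟩
        rcases hF0'img he with ⟨e0, he0, rfl⟩
        exact ⟨e0, ⟨he0, he⟩⟩
      have hF0sub : F0 ⊆ G.edgeSet := fun e he => he.1.1
      have hm := hi F0 hF0sub hF0ne
      have hFwsub : Fw ⊆ T := by
        rintro e ⟨heF, hwe⟩
        rcases hF heF with h | h
        · exact absurd hwe (w_not_mem_image_edge hw h)
        · exact h
      have hk : Fw.ncard ≤ 3 := by
        have := Set.ncard_le_ncard hFwsub (Set.toFinite _)
        rwa [hTcard] at this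
      rcases Fw.eq_empty_or_nonempty with hFw0 | hFwne
      · rw [hFw0, Set.ncard_empty] at hcardF
        omega
      · have hwEV : w ∈ eV F := by
          rcases hFwne with ⟨e, heF, hwe⟩
          exact ⟨e, heF, hwe⟩
        have hwnotin : ∀ S : Set α, w ∉ (φ : α → β) '' S := by
          rintro S ⟨x, -, hx⟩
          exact hw ⟨x, hx⟩
        by_cases hk3 : Fw.ncard = 3
        · -- all three edges at w are present
          have hFwT : Fw = T := Set.eq_of_subset_of_ncard_le hFwsub
            (by rw [hTcard, hk3]) (Set.toFinite _)
          have hmemu : s(w, φ u) ∈ F := by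
            have : s(w, φ u) ∈ Fw := by rw [hFwT]; exact Or.inl rfl
            exact this.1
          have hmemv : s(w, φ v) ∈ F := by
            have : s(w, φ v) ∈ Fw := by rw [hFwT]; exact Or.inr (Or.inl rfl)
            exact this.1
          set F1 : Set (Sym2 α) := insert s(u, v) F0 with hF1def
          have hF1sub : F1 ⊆ G.edgeSet := by
            rintro e (rfl | he)
            · exact huvE
            · exact he.1.1
          have huvF0 : s(u, v) ∉ F0 := fun hmem => hmem.1.2 rfl
          have hF1card : F1.ncard = F0.ncard + 1 :=
            Set.ncard_insert_of_notMem huvF0 (Set.toFinite _)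
          have hm1 := hi F1 hF1sub (Set.insert_nonempty _ _)
          have hEV1 : eV F1 = eV ({s(u, v)} : Set (Sym2 α)) ∪ eV F0 := by
            rw [hF1def, Set.insert_eq, eV_union]
          have hEV1sub : ∀ x ∈ eV F1, φ x ∈ eV F := by
            intro x hx
            rw [hEV1] at hx
            rcases hx with hx | hx
            · rw [eV_singleton] at hx
              rcases hx with rfl | rfl
              · exact ⟨s(w, φ x), hmemu, Sym2.mem_mk_right _ _⟩
              · exact ⟨s(w, φ x), hmemv, Sym2.mem_mk_right _ _⟩
            · exact himgEV x hx
          have hins : insert w ((φ : α → β) '' eV F1) ⊆ eV F := by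
            intro x hx
            rcases Set.mem_insert_iff.mp hx with rfl | ⟨x0, hx0, rfl⟩
            · exact hwEV
            · exact hEV1sub x0 hx0
          have hcnt : (eV F1).ncard + 1 ≤ (eV F).ncard := by
            have hle := Set.ncard_le_ncard hins (Set.toFinite _)
            rw [Set.ncard_insert_of_notMem (hwnotin _) (Set.toFinite _),
              Set.ncard_image_of_injective _ φ.injective] at hle
            exact hle
          omega
        · have hk2 : Fw.ncard ≤ 2 := by omega
          have hins : insert w ((φ : α → β) '' eV F0) ⊆ eV F := by
            intro x hx
            rcases Set.mem_insert_iff.mp hx with rfl | hx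
            · exact hwEV
            · exact hEVsub hx
          have hcnt : (eV F0).ncard + 1 ≤ (eV F).ncard := by
            have hle := Set.ncard_le_ncard hins (Set.toFinite _)
            rw [Set.ncard_insert_of_notMem (hwnotin _) (Set.toFinite _),
              Set.ncard_image_of_injective _ φ.injective] at hle
            exact hle
          omega
  · rw [gFreedom] at hf ⊢
    have hv : ((Set.univ : Set β).ncard : ℤ) = ((Set.univ : Set α).ncard : ℤ) + 1 := by
      rw [Set.ncard_univ, Set.ncard_univ, cov_natCard φ w hcov hw]
      push_cast
      ring
    have he : (G'.edgeSet.ncard : ℤ) = (G.edgeSet.ncard : ℤ) + 2 := by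
      rw [hcardE']
      push_cast
      ring
    rw [hv, he]
    linarith

end Aux5
section Aux6

lemma sparse_of_hom {α β : Type} [Fintype α] [Fintype β] {G : SimpleGraph α}
    {G' : SimpleGraph β} (f : G →g G') (hf : Function.Injective f) (h : Sparse G') :
    Sparse G := by
  intro F hF hne
  set F' : Set (Sym2 β) := Sym2.map (f : α → β) '' F with hF'def
  have hinj : Function.Injective (Sym2.map (f : α → β)) := Sym2.map.injective hf
  have hF' : F' ⊆ G'.edgeSet := by
    rintro _ ⟨e0, he0, rfl⟩
    exact f.map_mem_edgeSet (hF he0)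
  have hcard : F'.ncard = F.ncard := Set.ncard_image_of_injective _ hinj
  have heV : eV F' = (f : α → β) '' eV F := by
    ext x; constructor
    · rintro ⟨e0, ⟨e1, he1, rfl⟩, hx⟩
      rcases Sym2.mem_map.mp hx with ⟨a, ha, rfl⟩
      exact ⟨a, ⟨e1, he1, ha⟩, rfl⟩
    · rintro ⟨a, ⟨e1, he1, ha⟩, rfl⟩
      exact ⟨Sym2.map _ e1, ⟨e1, he1, rfl⟩, Sym2.mem_map.mpr ⟨a, ha, rfl⟩⟩
  have hr := h F' hF' (hne.image _)
  have himg2 : ((f : α → β) '' eV F).ncard = (eV F).ncard :=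
    Set.ncard_image_of_injective _ hf
  rw [hcard, heV, himg2] at hr
  exact hr

lemma maxIndep3_K2 : MaxIndep3 (⊤ : SimpleGraph (Fin 2)) := by
  have hE : (⊤ : SimpleGraph (Fin 2)).edgeSet = {s(0, 1)} := by
    ext e
    induction e with
    | _ x y =>
      simp only [SimpleGraph.mem_edgeSet, SimpleGraph.top_adj, Set.mem_singleton_iff]
      revert x y
      decide
  constructor
  · rw [indep3_iff_sparse]
    intro F hF hne
    rw [hE] at hF
    have hFeq : F = {s((0 : Fin 2), 1)} := hne.subset_singleton_iff.mp hF
    rw [hFeq, eV_singleton, Set.ncard_singleton,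
      Set.ncard_pair (by decide : (0 : Fin 2) ≠ 1)]
    norm_num
  · rw [gFreedom, hE, Set.ncard_singleton, Set.ncard_univ, Nat.card_eq_fintype_card,
      Fintype.card_fin]
    norm_num

lemma derived_maxIndep3 {n : ℕ} {G' : SimpleGraph (Fin n)}
    (hd : Derived (⊤ : SimpleGraph (Fin 2)) n G') : MaxIndep3 G' := by
  induction hd with
  | base => exact maxIndep3_K2
  | h1 _ hrel ih => exact h1_maxIndep3 hrel ih
  | h2 _ hrel ih => exact h2_maxIndep3 hrel ih

end Aux6
section Aux7

variable {V : Type} [Fintype V]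

lemma edgeFinset_card_eq_ncard {G : SimpleGraph V} [DecidableRel G.Adj] [DecidableEq V] :
    G.edgeFinset.card = G.edgeSet.ncard := by
  rw [Set.ncard_eq_toFinset_card', SimpleGraph.edgeFinset]

lemma incidenceSet_ncard {G : SimpleGraph V} [DecidableRel G.Adj] [DecidableEq V] (w : V) :
    (G.incidenceSet w).ncard = G.degree w := by
  rw [Set.ncard_eq_toFinset_card', Set.toFinset_card,
    ← SimpleGraph.card_incidenceFinset_eq_degree, SimpleGraph.incidenceFinset,
    Set.toFinset_card]

lemma neighborSet_ncard {G : SimpleGraph V} [DecidableRel G.Adj] [DecidableEq V] (w : V) :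
    (G.neighborSet w).ncard = G.degree w := by
  rw [Set.ncard_eq_toFinset_card', ← SimpleGraph.card_neighborSet_eq_degree]
  exact Set.toFinset_card _

lemma edgeSet_ncard_of_maxIndep3 {G : SimpleGraph V} (h : MaxIndep3 G) :
    (G.edgeSet.ncard : ℤ) = 2 * (Fintype.card V : ℤ) - 3 := by
  have hf := h.2
  rw [gFreedom, Set.ncard_univ, Nat.card_eq_fintype_card] at hf
  linarith

lemma degree_ge_two {G : SimpleGraph V} (h : MaxIndep3 G) (hconn : G.Connected)
    (h3 : 3 ≤ Fintype.card V) (w : V) : 2 ≤ (G.neighborSet w).ncard := by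
  classical
  have hE := edgeSet_ncard_of_maxIndep3 h
  have hsp := (indep3_iff_sparse G).mp h.1
  -- degree at least 1
  have hdeg1 : (G.neighborSet w).Nonempty := by
    obtain ⟨u, hu⟩ := Fintype.exists_ne_of_one_lt_card (by omega) w
    obtain ⟨p⟩ := hconn.preconnected w u
    cases p with
    | nil => exact absurd rfl (Ne.symm hu)
    | cons hadj _ => exact ⟨_, hadj⟩
  -- suppose degree exactly 1
  by_contra hlt
  push_neg at hlt
  have hdeg : (G.neighborSet w).ncard = 1 := by
    have h0 : 0 < (G.neighborSet w).ncard := Set.ncard_pos (Set.toFinite _) |>.mpr hdeg1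
    omega
  have hinc : (G.incidenceSet w).ncard = 1 := by
    rw [incidenceSet_ncard, ← neighborSet_ncard]
    exact hdeg
  set F : Set (Sym2 V) := G.edgeSet \ G.incidenceSet w with hFdef
  have hFsub : F ⊆ G.edgeSet := Set.diff_subset
  have hFcard : F.ncard + 1 = G.edgeSet.ncard := by
    rw [hFdef, ← hinc]
    exact Set.ncard_diff_add_ncard_of_subset (G.incidenceSet_subset w) (Set.toFinite _)
  have hFne : F.Nonempty := by
    apply Set.nonempty_of_ncard_ne_zero
    have hEge : 3 ≤ G.edgeSet.ncard := by omega
    omega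
  have hbound := hsp F hFsub hFne
  have heVF : eV F ⊆ {x | x ≠ w} := by
    rintro x ⟨e, ⟨heE, henI⟩, hx⟩
    intro hxw
    subst hxw
    exact henI ⟨heE, hx⟩
  have hcompl : ({x : V | x ≠ w} : Set V).ncard + 1 = Fintype.card V := by
    have : ({x : V | x ≠ w} : Set V) = ({w} : Set V)ᶜ := by
      ext x; simp [Set.mem_compl_iff]
    rw [this]
    have := Set.ncard_add_ncard_compl ({w} : Set V) (Set.toFinite _) (Set.toFinite _)
    rw [Set.ncard_singleton] at this
    rw [← Nat.card_eq_fintype_card]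
    omega
  have heVcard : (eV F).ncard ≤ Fintype.card V - 1 := by
    have := Set.ncard_le_ncard heVF (Set.toFinite _)
    omega
  have hn : 3 ≤ Fintype.card V := h3
  have h1 : ((eV F).ncard : ℤ) ≤ (Fintype.card V : ℤ) - 1 := by
    have := heVcard
    omega
  have h2 : (F.ncard : ℤ) = 2 * (Fintype.card V : ℤ) - 4 := by
    have := hFcard
    omega
  linarith

lemma exists_low_degree {G : SimpleGraph V} (h : MaxIndep3 G) (hconn : G.Connected)
    (h3 : 3 ≤ Fintype.card V) :
    ∃ w : V, (G.neighborSet w).ncard = 2 ∨ (G.neighborSet w).ncard = 3 := by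
  classical
  have hE := edgeSet_ncard_of_maxIndep3 h
  have hsum := G.sum_degrees_eq_twice_card_edges
  rw [edgeFinset_card_eq_ncard] at hsum
  by_contra hall
  push_neg at hall
  have hge : ∀ w : V, 4 ≤ G.degree w := by
    intro w
    have h2 := degree_ge_two h hconn h3 w
    have hne2 := (hall w).1
    have hne3 := (hall w).2
    rw [neighborSet_ncard] at h2 hne2 hne3
    omega
  have hsum4 : 4 * Fintype.card V ≤ ∑ v : V, G.degree v := by
    calc 4 * Fintype.card V = Finset.univ.card • 4 := by
          rw [Finset.card_univ, smul_eq_mul, mul_comm]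
      _ ≤ ∑ v : V, G.degree v := Finset.card_nsmul_le_sum _ _ _ (fun x _ => hge x)
  omega

end Aux7
section Aux8

variable {V : Type} [Fintype V] [DecidableEq V]

/-- delete a vertex -/
def delG (G : SimpleGraph V) (w : V) : SimpleGraph {x : V // x ≠ w} :=
  G.comap (Function.Embedding.subtype _)

lemma delG_adj {G : SimpleGraph V} {w : V} {x y : {x : V // x ≠ w}} :
    (delG G w).Adj x y ↔ G.Adj (x : V) (y : V) := Iff.rfl

/-- inclusion hom -/
def delHom (G : SimpleGraph V) (w : V) : delG G w →g G :=
  ⟨fun x => (x : V), fun h => h⟩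

lemma delG_edgeSet_image (G : SimpleGraph V) (w : V) :
    Sym2.map (fun x : {x : V // x ≠ w} => (x : V)) '' (delG G w).edgeSet
      = G.edgeSet \ G.incidenceSet w := by
  ext e
  constructor
  · rintro ⟨e0, he0, rfl⟩
    induction e0 with
    | _ x y =>
      rw [Sym2.map_pair_eq]
      refine ⟨he0, ?_⟩
      rintro ⟨-, hmem⟩
      rcases Sym2.mem_iff.mp hmem with h | h
      · exact x.2 h.symm
      · exact y.2 h.symm
  · intro he
    induction e with
    | _ x y =>
      obtain ⟨heE, hnI⟩ := he
      have hx : x ≠ w := by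
        rintro rfl
        exact hnI ⟨heE, Sym2.mem_mk_left _ _⟩
      have hy : y ≠ w := by
        rintro rfl
        exact hnI ⟨heE, Sym2.mem_mk_right _ _⟩
      exact ⟨s(⟨x, hx⟩, ⟨y, hy⟩), heE, Sym2.map_pair_eq _ _ _⟩

lemma delG_edgeSet_ncard (G : SimpleGraph V) (w : V) :
    (delG G w).edgeSet.ncard + (G.incidenceSet w).ncard = G.edgeSet.ncard := by
  have h1 : (delG G w).edgeSet.ncard
      = (Sym2.map (fun x : {x : V // x ≠ w} => (x : V)) '' (delG G w).edgeSet).ncard :=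
    (Set.ncard_image_of_injective _ (Sym2.map.injective Subtype.val_injective)).symm
  rw [h1, delG_edgeSet_image]
  exact Set.ncard_diff_add_ncard_of_subset (G.incidenceSet_subset w) (Set.toFinite _)

lemma delG_sparse {G : SimpleGraph V} (h : Sparse G) (w : V) : Sparse (delG G w) :=
  sparse_of_hom (delHom G w) Subtype.val_injective h

lemma card_del (w : V) : Fintype.card {x : V // x ≠ w} + 1 = Fintype.card V := by
  have h1 : Fintype.card {x : V // x = w} = 1 := Fintype.card_subtype_eq w
  have h2 := Fintype.card_subtype_compl (fun x : V => x = w)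
  have h4 : 0 < Fintype.card V := Fintype.card_pos_iff.mpr ⟨w⟩
  rw [h1] at h2
  have h5 : Fintype.card {x : V // ¬ x = w} = Fintype.card {x : V // x ≠ w} := rfl
  omega

/-- extend an equivalence of the deleted graph to the whole vertex set,
sending `Fin.last` to `w` -/
def extendEquiv {k : ℕ} (w : V) (eqv : {x : V // x ≠ w} ≃ Fin k) : Fin (k + 1) ≃ V where
  toFun := Fin.lastCases w (fun j => (eqv.symm j : V))
  invFun x := if h : x = w then Fin.last k else (eqv ⟨x, h⟩).castSucc
  left_inv i := by
    refine Fin.lastCases ?_ ?_ i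
    · simp
    · intro j
      simp only [Fin.lastCases_castSucc]
      rw [dif_neg (eqv.symm j).2]
      simp
  right_inv x := by
    by_cases h : x = w
    · subst h
      simp
    · simp only [dif_neg h, Fin.lastCases_castSucc]
      rw [Equiv.symm_apply_apply]

@[simp] lemma extendEquiv_last {k : ℕ} (w : V) (eqv : {x : V // x ≠ w} ≃ Fin k) :
    extendEquiv w eqv (Fin.last k) = w := by
  simp [extendEquiv]

@[simp] lemma extendEquiv_castSucc {k : ℕ} (w : V) (eqv : {x : V // x ≠ w} ≃ Fin k)
    (j : Fin k) : extendEquiv w eqv (Fin.castSucc j) = (eqv.symm j : V) := by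
  simp [extendEquiv]

end Aux8
section Aux9

variable {V : Type} [Fintype V]

/-- edges avoiding `w` -/
def delE (G : SimpleGraph V) (w : V) : Set (Sym2 V) := {e ∈ G.edgeSet | w ∉ e}

lemma delE_eq (G : SimpleGraph V) (w : V) : delE G w = G.edgeSet \ G.incidenceSet w := by
  ext e
  constructor
  · rintro ⟨hE, hnw⟩
    exact ⟨hE, fun hI => hnw hI.2⟩
  · rintro ⟨hE, hnI⟩
    exact ⟨hE, fun hw => hnI ⟨hE, hw⟩⟩

/-- a tight set of edges avoiding `w` -/
def TightSet (G : SimpleGraph V) (w : V) (F : Set (Sym2 V)) : Prop :=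
  F ⊆ delE G w ∧ F.Nonempty ∧ (F.ncard : ℤ) = 2 * ((eV F).ncard : ℤ) - 3

lemma eq_singleton_of_mem_of_ncard_le_one {α : Type} {s : Set α} (hfin : s.Finite) {a : α}
    (ha : a ∈ s) (h1 : s.ncard ≤ 1) : s = {a} := by
  apply Set.Subset.antisymm
  · intro x hx
    exact (Set.ncard_le_one hfin).mp h1 x hx a ha
  · rintro x rfl
    exact ha

lemma tight_union {G : SimpleGraph V} {w : V} (hsp : Sparse G) {A B : Set (Sym2 V)}
    (hA : TightSet G w A) (hB : TightSet G w B) (h2 : 2 ≤ ((eV A ∩ eV B).ncard : ℤ)) :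
    TightSet G w (A ∪ B) := by
  obtain ⟨hAs, hAne, hAt⟩ := hA
  obtain ⟨hBs, hBne, hBt⟩ := hB
  have hABs : A ∪ B ⊆ delE G w := Set.union_subset hAs hBs
  have hABE : A ∪ B ⊆ G.edgeSet := fun e he => (hABs he).1
  have hABne : (A ∪ B).Nonempty := hAne.mono Set.subset_union_left
  have hsum : (A ∪ B).ncard + (A ∩ B).ncard = A.ncard + B.ncard :=
    Set.ncard_union_add_ncard_inter A B (Set.toFinite _) (Set.toFinite _)
  have hVsum : (eV A ∪ eV B).ncard + (eV A ∩ eV B).ncard = (eV A).ncard + (eV B).ncard :=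
    Set.ncard_union_add_ncard_inter _ _ (Set.toFinite _) (Set.toFinite _)
  have heVU : eV (A ∪ B) = eV A ∪ eV B := eV_union A B
  have hupper := hsp (A ∪ B) hABE hABne
  rw [heVU] at hupper
  have hVint : eV (A ∩ B) ⊆ eV A ∩ eV B := by
    rintro x ⟨e, he, hx⟩
    exact ⟨⟨e, he.1, hx⟩, ⟨e, he.2, hx⟩⟩
  refine ⟨hABs, hABne, ?_⟩
  rw [heVU]
  rcases (A ∩ B).eq_empty_or_nonempty with hi | hi
  · rw [hi, Set.ncard_empty] at hsum
    -- |A ∪ B| = |A| + |B| = 2|eVA| + 2|eVB| - 6 ≥ 2|eV∪| + 2·2 - 6, contradicting sparsity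
    exfalso
    have h1 : ((A ∪ B).ncard : ℤ) = (A.ncard : ℤ) + (B.ncard : ℤ) := by exact_mod_cast hsum
    have h2' : ((eV A ∪ eV B).ncard : ℤ) + ((eV A ∩ eV B).ncard : ℤ)
        = ((eV A).ncard : ℤ) + ((eV B).ncard : ℤ) := by exact_mod_cast hVsum
    linarith
  · have hiE : A ∩ B ⊆ G.edgeSet := fun e he => (hAs he.1).1
    have hilow := hsp (A ∩ B) hiE hi
    have hVle : ((eV (A ∩ B)).ncard : ℤ) ≤ ((eV A ∩ eV B).ncard : ℤ) := by
      exact_mod_cast Set.ncard_le_ncard hVint (Set.toFinite _)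
    have h1 : ((A ∪ B).ncard : ℤ) + ((A ∩ B).ncard : ℤ)
        = (A.ncard : ℤ) + (B.ncard : ℤ) := by exact_mod_cast hsum
    have h2' : ((eV A ∪ eV B).ncard : ℤ) + ((eV A ∩ eV B).ncard : ℤ)
        = ((eV A).ncard : ℤ) + ((eV B).ncard : ℤ) := by exact_mod_cast hVsum
    linarith

lemma no_tight_cover {G : SimpleGraph V} {w u v z : V} (hsp : Sparse G)
    (hN : G.neighborSet w = {u, v, z}) (huv : u ≠ v) (huz : u ≠ z) (hvz : v ≠ z)
    {D : Set (Sym2 V)} (hD : TightSet G w D) (hu : u ∈ eV D) (hv : v ∈ eV D)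
    (hz : z ∈ eV D) : False := by
  obtain ⟨hDs, hDne, hDt⟩ := hD
  have hwu : G.Adj w u := by
    have : u ∈ G.neighborSet w := by rw [hN]; exact Or.inl rfl
    exact this
  have hwv : G.Adj w v := by
    have : v ∈ G.neighborSet w := by rw [hN]; exact Or.inr (Or.inl rfl)
    exact this
  have hwz : G.Adj w z := by
    have : z ∈ G.neighborSet w := by rw [hN]; exact Or.inr (Or.inr rfl)
    exact this
  have hwD : ∀ e ∈ D, w ∉ e := fun e he => (hDs he).2
  have hwnotin : w ∉ eV D := by
    rintro ⟨e, he, hw⟩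
    exact hwD e he hw
  have hnz : s(w, z) ∉ D := fun h => hwD _ h (Sym2.mem_mk_left _ _)
  have hnv : s(w, v) ∉ insert s(w, z) D := by
    rintro (h | h)
    · rw [Sym2.eq_iff] at h
      rcases h with ⟨-, h⟩ | ⟨h, -⟩
      · exact hvz h
      · exact hwz.ne' (h.symm.trans rfl) -- w = z case: h : w = z
    · exact hwD _ h (Sym2.mem_mk_left _ _)
  have hnu : s(w, u) ∉ insert s(w, v) (insert s(w, z) D) := by
    rintro (h | h | h)
    · rw [Sym2.eq_iff] at h
      rcases h with ⟨-, h⟩ | ⟨h, -⟩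
      · exact huv h
      · exact hwv.ne' h.symm
    · rw [Sym2.eq_iff] at h
      rcases h with ⟨-, h⟩ | ⟨h, -⟩
      · exact huz h
      · exact hwz.ne' h.symm
    · exact hwD _ h (Sym2.mem_mk_left _ _)
  set Fs : Set (Sym2 V) := insert s(w, u) (insert s(w, v) (insert s(w, z) D)) with hFs
  have hFsE : Fs ⊆ G.edgeSet := by
    rintro e (rfl | rfl | rfl | he)
    · exact hwu
    · exact hwv
    · exact hwz
    · exact (hDs he).1
  have hFscard : Fs.ncard = D.ncard + 3 := by
    rw [hFs, Set.ncard_insert_of_notMem hnu (Set.toFinite _),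
      Set.ncard_insert_of_notMem hnv (Set.toFinite _),
      Set.ncard_insert_of_notMem hnz (Set.toFinite _)]
  have heVFs : eV Fs = insert w (eV D) := by
    rw [hFs, Set.insert_eq, Set.insert_eq s(w,v), Set.insert_eq s(w,z), eV_union, eV_union,
      eV_union, eV_singleton, eV_singleton, eV_singleton]
    ext x
    constructor
    · rintro ((rfl | rfl) | (rfl | rfl) | (rfl | rfl) | hx)
      · exact Or.inl rfl
      · exact Or.inr hu
      · exact Or.inl rfl
      · exact Or.inr hv
      · exact Or.inl rfl
      · exact Or.inr hz
      · exact Or.inr hx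
    · rintro (rfl | hx)
      · exact Or.inl (Or.inl rfl)
      · exact Or.inr (Or.inr (Or.inr hx))
  have hFscardV : (eV Fs).ncard = (eV D).ncard + 1 := by
    rw [heVFs, Set.ncard_insert_of_notMem hwnotin (Set.toFinite _)]
  have hFsne : Fs.Nonempty := ⟨_, Or.inl rfl⟩
  have hb := hsp Fs hFsE hFsne
  rw [hFscard, hFscardV] at hb
  push_cast at hb
  linarith

end Aux9
section Aux10

variable {V : Type} [Fintype V]

lemma eV_empty {V' : Type} : eV (∅ : Set (Sym2 V')) = ∅ := by
  ext x
  simp only [Set.mem_empty_iff_false, iff_false]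
  rintro ⟨e, he, -⟩
  exact he

lemma exists_good_pair {G : SimpleGraph V} (hsp : Sparse G) {w u v z : V}
    (hN : G.neighborSet w = {u, v, z}) (huv : u ≠ v) (huz : u ≠ z) (hvz : v ≠ z) :
    ∃ p q r : V, ({p, q, r} : Set V) = {u, v, z} ∧ p ≠ q ∧ q ≠ r ∧ p ≠ r ∧ ¬ G.Adj p q ∧
      ∀ F : Set (Sym2 V), F ⊆ delE G w →
        ((insert s(p, q) F).ncard : ℤ) ≤ 2 * (((eV (insert s(p, q) F)).ncard : ℤ)) - 3 := by
  have hwnbr : ∀ x ∈ ({u, v, z} : Set V), G.Adj w x := by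
    intro x hx
    have : x ∈ G.neighborSet w := by rw [hN]; exact hx
    exact this
  by_contra hcon
  push_neg at hcon
  have getTight : ∀ p q r : V, ({p, q, r} : Set V) = {u, v, z} → p ≠ q → q ≠ r → p ≠ r →
      ∃ F, TightSet G w F ∧ p ∈ eV F ∧ q ∈ eV F := by
    intro p q r hset hpq hqr hpr
    have hpmem : p ∈ ({u, v, z} : Set V) := by rw [← hset]; exact Or.inl rfl
    have hqmem : q ∈ ({u, v, z} : Set V) := by rw [← hset]; exact Or.inr (Or.inl rfl)
    have hwp : w ≠ p := (hwnbr p hpmem).ne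
    have hwq : w ≠ q := (hwnbr q hqmem).ne
    by_cases hadj : G.Adj p q
    · refine ⟨{s(p, q)}, ⟨?_, ⟨_, rfl⟩, ?_⟩, ?_, ?_⟩
      · rintro e rfl
        refine ⟨hadj, ?_⟩
        intro hwm
        rcases Sym2.mem_iff.mp hwm with rfl | rfl
        · exact hwp rfl
        · exact hwq rfl
      · rw [Set.ncard_singleton, eV_singleton, Set.ncard_pair hpq]
        norm_num
      · rw [eV_singleton]; exact Or.inl rfl
      · rw [eV_singleton]; exact Or.inr rfl
    · obtain ⟨F, hFsub, hviol⟩ := hcon p q r hset hpq hqr hpr hadj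
      have hFE : F ⊆ G.edgeSet := fun e he => (hFsub he).1
      have hpqF : s(p, q) ∉ F := fun h => hadj (hFE h)
      have hins : (insert s(p, q) F).ncard = F.ncard + 1 :=
        Set.ncard_insert_of_notMem hpqF (Set.toFinite _)
      have heVins : eV (insert s(p, q) F) = {p, q} ∪ eV F := by
        rw [Set.insert_eq, eV_union, eV_singleton]
      have hFne : F.Nonempty := by
        rcases F.eq_empty_or_nonempty with rfl | h
        · exfalso
          rw [hins, heVins, eV_empty, Set.union_empty, Set.ncard_empty,
            Set.ncard_pair hpq] at hviol
          norm_num at hviol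
        · exact h
      have hb := hsp F hFE hFne
      rw [hins, heVins] at hviol
      have hle : (eV F).ncard ≤ ({p, q} ∪ eV F).ncard :=
        Set.ncard_le_ncard Set.subset_union_right (Set.toFinite _)
      have ht' : ({p, q} ∪ eV F).ncard ≤ (eV F).ncard := by omega
      have hseteq : eV F = {p, q} ∪ eV F :=
        Set.eq_of_subset_of_ncard_le Set.subset_union_right ht' (Set.toFinite _)
      have hp : p ∈ eV F := by rw [hseteq]; exact Or.inl (Or.inl rfl)
      have hq : q ∈ eV F := by rw [hseteq]; exact Or.inl (Or.inr rfl)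
      refine ⟨F, ⟨hFsub, hFne, ?_⟩, hp, hq⟩
      rw [← hseteq] at hviol
      omega
  have hsetuzv : ({u, z, v} : Set V) = {u, v, z} := by
    ext x
    simp only [Set.mem_insert_iff, Set.mem_singleton_iff]
    tauto
  have hsetvzu : ({v, z, u} : Set V) = {u, v, z} := by
    ext x
    simp only [Set.mem_insert_iff, Set.mem_singleton_iff]
    tauto
  obtain ⟨A, hA, hAu, hAv⟩ := getTight u v z rfl huv hvz huz
  obtain ⟨B, hB, hBu, hBz⟩ := getTight u z v hsetuzv huz hvz.symm huv
  obtain ⟨C, hC, hCv, hCz⟩ := getTight v z u hsetvzu hvz huz.symm huv.symm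
  have hdisjE : ∀ (X Y : Set (Sym2 V)) (c : V), X ⊆ G.edgeSet → eV X ∩ eV Y = {c} →
      X ∩ Y = ∅ := by
    intro X Y c hXE hsing
    ext e
    simp only [Set.mem_inter_iff, Set.mem_empty_iff_false, iff_false]
    rintro ⟨hx, hy⟩
    have hnd : ¬ e.IsDiag := G.not_isDiag_of_mem_edgeSet (hXE hx)
    induction e with
    | _ a b =>
      have ha : a ∈ eV X ∩ eV Y :=
        ⟨⟨_, hx, Sym2.mem_mk_left _ _⟩, ⟨_, hy, Sym2.mem_mk_left _ _⟩⟩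
      have hb : b ∈ eV X ∩ eV Y :=
        ⟨⟨_, hx, Sym2.mem_mk_right _ _⟩, ⟨_, hy, Sym2.mem_mk_right _ _⟩⟩
      rw [hsing] at ha hb
      exact hnd (Sym2.mk_isDiag_iff.mpr (ha.trans hb.symm))
  by_cases hAB : 2 ≤ ((eV A ∩ eV B).ncard : ℤ)
  · have hU := tight_union hsp hA hB hAB
    refine no_tight_cover hsp hN huv huz hvz hU ?_ ?_ ?_ <;> rw [eV_union]
    · exact Or.inl hAu
    · exact Or.inl hAv
    · exact Or.inr hBz
  · by_cases hAC : 2 ≤ ((eV A ∩ eV C).ncard : ℤ)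
    · have hU := tight_union hsp hA hC hAC
      refine no_tight_cover hsp hN huv huz hvz hU ?_ ?_ ?_ <;> rw [eV_union]
      · exact Or.inl hAu
      · exact Or.inl hAv
      · exact Or.inr hCz
    · by_cases hBC : 2 ≤ ((eV B ∩ eV C).ncard : ℤ)
      · have hU := tight_union hsp hB hC hBC
        refine no_tight_cover hsp hN huv huz hvz hU ?_ ?_ ?_ <;> rw [eV_union]
        · exact Or.inl hBu
        · exact Or.inr hCv
        · exact Or.inl hBz
      · -- all pairwise vertex intersections are singletons
        have hABcard : (eV A ∩ eV B).ncard ≤ 1 := by omega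
        have hACcard : (eV A ∩ eV C).ncard ≤ 1 := by omega
        have hBCcard : (eV B ∩ eV C).ncard ≤ 1 := by omega
        have sAB : eV A ∩ eV B = {u} :=
          eq_singleton_of_mem_of_ncard_le_one (Set.toFinite _) ⟨hAu, hBu⟩ hABcard
        have sAC : eV A ∩ eV C = {v} :=
          eq_singleton_of_mem_of_ncard_le_one (Set.toFinite _) ⟨hAv, hCv⟩ hACcard
        have sBC : eV B ∩ eV C = {z} :=
          eq_singleton_of_mem_of_ncard_le_one (Set.toFinite _) ⟨hBz, hCz⟩ hBCcard
        have hAE : A ⊆ G.edgeSet := fun e he => (hA.1 he).1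
        have hBE : B ⊆ G.edgeSet := fun e he => (hB.1 he).1
        have eAB : A ∩ B = ∅ := hdisjE A B u hAE sAB
        have eAC : A ∩ C = ∅ := hdisjE A C v hAE sAC
        have eBC : B ∩ C = ∅ := hdisjE B C z hBE sBC
        have hsumAB : (A ∪ B).ncard + (A ∩ B).ncard = A.ncard + B.ncard :=
          Set.ncard_union_add_ncard_inter A B (Set.toFinite _) (Set.toFinite _)
        have hsumABC : ((A ∪ B) ∪ C).ncard + ((A ∪ B) ∩ C).ncard = (A ∪ B).ncard + C.ncard :=
          Set.ncard_union_add_ncard_inter _ _ (Set.toFinite _) (Set.toFinite _)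
        have hABCint : (A ∪ B) ∩ C = ∅ := by
          rw [Set.union_inter_distrib_right, eAC, eBC, Set.union_empty]
        have hVAB : (eV A ∪ eV B).ncard + (eV A ∩ eV B).ncard
            = (eV A).ncard + (eV B).ncard :=
          Set.ncard_union_add_ncard_inter _ _ (Set.toFinite _) (Set.toFinite _)
        have hVABC : ((eV A ∪ eV B) ∪ eV C).ncard + ((eV A ∪ eV B) ∩ eV C).ncard
            = (eV A ∪ eV B).ncard + (eV C).ncard :=
          Set.ncard_union_add_ncard_inter _ _ (Set.toFinite _) (Set.toFinite _)
        have hVint2 : (eV A ∪ eV B) ∩ eV C = {v, z} := by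
          rw [Set.union_inter_distrib_right, sAC, sBC]
          rfl
        have hVint2card : ((eV A ∪ eV B) ∩ eV C).ncard = 2 := by
          rw [hVint2]
          exact Set.ncard_pair hvz
        set D : Set (Sym2 V) := (A ∪ B) ∪ C with hD
        have hDeV : eV D = (eV A ∪ eV B) ∪ eV C := by rw [hD, eV_union, eV_union]
        have hDsub : D ⊆ delE G w :=
          Set.union_subset (Set.union_subset hA.1 hB.1) hC.1
        have hDne : D.Nonempty := hA.2.1.mono (fun e he => Or.inl (Or.inl he))
        have hDt : TightSet G w D := by
          refine ⟨hDsub, hDne, ?_⟩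
          have tA := hA.2.2
          have tB := hB.2.2
          have tC := hC.2.2
          rw [sAB, Set.ncard_singleton] at hVAB
          rw [eAB, Set.ncard_empty] at hsumAB
          rw [hABCint, Set.ncard_empty] at hsumABC
          rw [hVint2card] at hVABC
          rw [hDeV]
          push_cast at tA tB tC ⊢
          omega
        refine no_tight_cover hsp hN huv huz hvz hDt ?_ ?_ ?_ <;> rw [hDeV]
        · exact Or.inl (Or.inl hAu)
        · exact Or.inl (Or.inl hAv)
        · exact Or.inl (Or.inr hBz)

end Aux10
section Aux11

variable {V : Type} [Fintype V] [DecidableEq V]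

lemma fin_cover (n0 : ℕ) :
    ∀ y : Fin (n0 + 1), y ∈ Set.range ⇑(finCastSuccEmb n0) ∨ y = Fin.last n0 := by
  intro y
  by_cases h : y = Fin.last n0
  · exact Or.inr h
  · exact Or.inl ⟨y.castPred h, Fin.castSucc_castPred y h⟩

lemma fin_last_not_range (n0 : ℕ) : Fin.last n0 ∉ Set.range ⇑(finCastSuccEmb n0) := by
  rintro ⟨j, hj⟩
  exact (Fin.castSucc_lt_last j).ne hj

lemma reduce_deg2 {G : SimpleGraph V} {w a b : V}
    (hNeq : G.neighborSet w = {a, b}) (hab : a ≠ b)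
    {n0 : ℕ} {G'' : SimpleGraph (Fin n0)} (e : delG G w ≃g G'') :
    ∃ G' : SimpleGraph (Fin (n0 + 1)),
      Henneberg1Rel G'' G' (finCastSuccEmb n0) (Fin.last n0) ∧ Nonempty (G ≃g G') := by
  have hwa : G.Adj w a := by
    have : a ∈ G.neighborSet w := by rw [hNeq]; exact Or.inl rfl
    exact this
  have hwb : G.Adj w b := by
    have : b ∈ G.neighborSet w := by rw [hNeq]; exact Or.inr rfl
    exact this
  have haw : a ≠ w := hwa.ne'
  have hbw : b ≠ w := hwb.ne'
  set eqv : {x : V // x ≠ w} ≃ Fin n0 := e.toEquiv with heqv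
  set χ : Fin (n0 + 1) ≃ V := extendEquiv w eqv with hχ
  set G' : SimpleGraph (Fin (n0 + 1)) := SimpleGraph.comap (χ : Fin (n0 + 1) → V) G with hG'
  have hiso : Nonempty (G ≃g G') := by
    refine ⟨⟨χ.symm, ?_⟩⟩
    intro x y
    show G.Adj (χ (χ.symm x)) (χ (χ.symm y)) ↔ G.Adj x y
    rw [Equiv.apply_symm_apply, Equiv.apply_symm_apply]
  have hχcast : ∀ j : Fin n0, χ ((finCastSuccEmb n0) j) = ((eqv.symm j : {x : V // x ≠ w}) : V) :=
    fun j => extendEquiv_castSucc w eqv j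
  have hχlast : χ (Fin.last n0) = w := extendEquiv_last w eqv
  have hGadj : ∀ i j : Fin n0, G.Adj ((eqv.symm i : {x : V // x ≠ w}) : V)
      ((eqv.symm j : {x : V // x ≠ w}) : V) ↔ G''.Adj i j := by
    intro i j
    have h1 : G''.Adj (e (eqv.symm i)) (e (eqv.symm j)) ↔
        (delG G w).Adj (eqv.symm i) (eqv.symm j) := e.map_adj_iff
    have h2 : e (eqv.symm i) = i := by
      show eqv (eqv.symm i) = i
      exact Equiv.apply_symm_apply _ _
    have h3 : e (eqv.symm j) = j := by
      show eqv (eqv.symm j) = j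
      exact Equiv.apply_symm_apply _ _
    rw [h2, h3] at h1
    exact h1.symm
  have hvaleq : ∀ (i : Fin n0) (x : V) (hx : x ≠ w),
      ((eqv.symm i : {x : V // x ≠ w}) : V) = x ↔ i = eqv ⟨x, hx⟩ := by
    intro i x hx
    constructor
    · intro h
      have h2 : eqv.symm i = ⟨x, hx⟩ := Subtype.ext h
      rw [← h2, Equiv.apply_symm_apply]
    · intro h
      rw [h, Equiv.symm_apply_apply]
  have hkey2 : ∀ i : Fin n0, G.Adj ((eqv.symm i : {x : V // x ≠ w}) : V) w ↔
      (i = eqv ⟨a, haw⟩ ∨ i = eqv ⟨b, hbw⟩) := by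
    intro i
    constructor
    · intro h
      have : ((eqv.symm i : {x : V // x ≠ w}) : V) ∈ G.neighborSet w := h.symm
      rw [hNeq] at this
      rcases this with h' | h'
      · exact Or.inl ((hvaleq i a haw).mp h')
      · exact Or.inr ((hvaleq i b hbw).mp h')
    · intro h
      rcases h with h' | h'
      · have := (hvaleq i a haw).mpr h'
        rw [this]
        exact hwa.symm
      · have := (hvaleq i b hbw).mpr h'
        rw [this]
        exact hwb.symm
  have hne' : eqv ⟨a, haw⟩ ≠ eqv ⟨b, hbw⟩ := by
    intro h
    exact hab (Subtype.ext_iff.mp (eqv.injective h))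
  refine ⟨G', ⟨fin_cover n0, fin_last_not_range n0, eqv ⟨a, haw⟩, eqv ⟨b, hbw⟩, hne', ?_⟩, hiso⟩
  intro x y
  show G.Adj (χ x) (χ y) ↔ _
  have hlastne : ∀ j : Fin n0, (finCastSuccEmb n0) j ≠ Fin.last n0 :=
    fun j => (Fin.castSucc_lt_last j).ne
  rcases fin_cover n0 x with ⟨i, rfl⟩ | rfl <;> rcases fin_cover n0 y with ⟨j, rfl⟩ | rfl
  · -- both old
    rw [hχcast, hχcast, hGadj]
    constructor
    · intro h
      exact Or.inl ⟨i, j, h, rfl, rfl⟩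
    · rintro (⟨c, d, hcd, hx, hy⟩ | ⟨hx, -⟩ | ⟨hy, -⟩)
      · rw [(finCastSuccEmb n0).injective hx, (finCastSuccEmb n0).injective hy]
        exact hcd
      · exact absurd hx (hlastne i)
      · exact absurd hy (hlastne j)
  · -- old, new
    rw [hχcast, hχlast, hkey2]
    constructor
    · intro h
      refine Or.inr (Or.inr ⟨rfl, ?_⟩)
      rcases h with h' | h'
      · exact Or.inl (by rw [h'])
      · exact Or.inr (by rw [h'])
    · rintro (⟨c, d, hcd, hx, hy⟩ | ⟨hx, -⟩ | ⟨-, (hx | hx)⟩)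
      · exact absurd hy.symm (hlastne d)
      · exact absurd hx (hlastne i)
      · exact Or.inl ((finCastSuccEmb n0).injective hx)
      · exact Or.inr ((finCastSuccEmb n0).injective hx)
  · -- new, old
    rw [hχlast, hχcast]
    have hcomm : G.Adj w ((eqv.symm j : {x : V // x ≠ w}) : V) ↔
        G.Adj ((eqv.symm j : {x : V // x ≠ w}) : V) w := ⟨fun h => h.symm, fun h => h.symm⟩
    rw [hcomm, hkey2]
    constructor
    · intro h
      refine Or.inr (Or.inl ⟨rfl, ?_⟩)
      rcases h with h' | h'
      · exact Or.inl (by rw [h'])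
      · exact Or.inr (by rw [h'])
    · rintro (⟨c, d, hcd, hx, hy⟩ | ⟨-, (hy | hy)⟩ | ⟨hy, -⟩)
      · exact absurd hx.symm (hlastne c)
      · exact Or.inl ((finCastSuccEmb n0).injective hy)
      · exact Or.inr ((finCastSuccEmb n0).injective hy)
      · exact absurd hy (hlastne j)
  · -- both new
    rw [hχlast]
    constructor
    · intro h
      exact absurd rfl h.ne
    · rintro (⟨c, d, hcd, hx, hy⟩ | ⟨-, (hy | hy)⟩ | ⟨-, (hx | hx)⟩)
      · exact absurd hx.symm (hlastne c)
      · exact absurd hy.symm (hlastne (eqv ⟨a, haw⟩))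
      · exact absurd hy.symm (hlastne (eqv ⟨b, hbw⟩))
      · exact absurd hx.symm (hlastne (eqv ⟨a, haw⟩))
      · exact absurd hx.symm (hlastne (eqv ⟨b, hbw⟩))

end Aux11
section Aux12

variable {V : Type} [Fintype V] [DecidableEq V]

lemma reduce_deg3 {G : SimpleGraph V} {w p q r : V}
    (hNeq : G.neighborSet w = {p, q, r}) (hpq : p ≠ q) (hqr : q ≠ r) (hpr : p ≠ r)
    (hnadj : ¬ G.Adj p q)
    (hp : p ≠ w) (hq : q ≠ w) (hr : r ≠ w)
    {n0 : ℕ} {G'' : SimpleGraph (Fin n0)}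
    (e : (delG G w ⊔ SimpleGraph.fromEdgeSet {s((⟨p, hp⟩ : {x : V // x ≠ w}), ⟨q, hq⟩)}) ≃g G'') :
    ∃ G' : SimpleGraph (Fin (n0 + 1)),
      Henneberg2Rel G'' G' (finCastSuccEmb n0) (Fin.last n0) ∧ Nonempty (G ≃g G') := by
  set G₁ : SimpleGraph {x : V // x ≠ w} :=
    delG G w ⊔ SimpleGraph.fromEdgeSet {s((⟨p, hp⟩ : {x : V // x ≠ w}), ⟨q, hq⟩)} with hG₁
  have hwp : G.Adj w p := by
    have : p ∈ G.neighborSet w := by rw [hNeq]; exact Or.inl rfl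
    exact this
  have hwq : G.Adj w q := by
    have : q ∈ G.neighborSet w := by rw [hNeq]; exact Or.inr (Or.inl rfl)
    exact this
  have hwr : G.Adj w r := by
    have : r ∈ G.neighborSet w := by rw [hNeq]; exact Or.inr (Or.inr rfl)
    exact this
  set eqv : {x : V // x ≠ w} ≃ Fin n0 := e.toEquiv with heqv
  set χ : Fin (n0 + 1) ≃ V := extendEquiv w eqv with hχ
  set G' : SimpleGraph (Fin (n0 + 1)) := SimpleGraph.comap (χ : Fin (n0 + 1) → V) G with hG'
  have hiso : Nonempty (G ≃g G') := by
    refine ⟨⟨χ.symm, ?_⟩⟩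
    intro x y
    show G.Adj (χ (χ.symm x)) (χ (χ.symm y)) ↔ G.Adj x y
    rw [Equiv.apply_symm_apply, Equiv.apply_symm_apply]
  have hχcast : ∀ j : Fin n0, χ ((finCastSuccEmb n0) j) = ((eqv.symm j : {x : V // x ≠ w}) : V) :=
    fun j => extendEquiv_castSucc w eqv j
  have hχlast : χ (Fin.last n0) = w := extendEquiv_last w eqv
  have hvaleq : ∀ (i : Fin n0) (x : V) (hx : x ≠ w),
      ((eqv.symm i : {x : V // x ≠ w}) : V) = x ↔ i = eqv ⟨x, hx⟩ := by
    intro i x hx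
    constructor
    · intro h
      have h2 : eqv.symm i = ⟨x, hx⟩ := Subtype.ext h
      rw [← h2, Equiv.apply_symm_apply]
    · intro h
      rw [h, Equiv.symm_apply_apply]
  set pu : Fin n0 := eqv ⟨p, hp⟩ with hpu
  set qv : Fin n0 := eqv ⟨q, hq⟩ with hqv
  set rz : Fin n0 := eqv ⟨r, hr⟩ with hrz
  -- adjacency in G₁ vs G on values
  have hG1adj : ∀ x y : {x : V // x ≠ w},
      G₁.Adj x y ↔ (G.Adj (x : V) (y : V) ∨ s((x : V), (y : V)) = s(p, q)) := by
    intro x y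
    rw [hG₁, SimpleGraph.sup_adj, SimpleGraph.fromEdgeSet_adj]
    constructor
    · rintro (h | ⟨hs, -⟩)
      · exact Or.inl h
      · right
        have := congrArg (Sym2.map (fun t : {x : V // x ≠ w} => (t : V))) hs
        rwa [Sym2.map_pair_eq, Sym2.map_pair_eq] at this
    · rintro (h | hs)
      · exact Or.inl h
      · right
        rw [Sym2.eq_iff] at hs
        constructor
        · rcases hs with ⟨h1, h2⟩ | ⟨h1, h2⟩
          · have hx : x = ⟨p, hp⟩ := Subtype.ext h1
            have hy : y = ⟨q, hq⟩ := Subtype.ext h2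
            rw [hx, hy]
            rfl
          · have hx : x = ⟨q, hq⟩ := Subtype.ext h1
            have hy : y = ⟨p, hp⟩ := Subtype.ext h2
            rw [hx, hy, Sym2.eq_swap]
            rfl
        · rcases hs with ⟨h1, h2⟩ | ⟨h1, h2⟩
          · intro hxy
            rw [hxy] at h1
            exact hpq (h1.symm.trans h2)
          · intro hxy
            rw [hxy] at h1
            exact hpq (h2.symm.trans h1)
  have hGadj1 : ∀ x y : {x : V // x ≠ w},
      G.Adj (x : V) (y : V) ↔ (G₁.Adj x y ∧ s((x : V), (y : V)) ≠ s(p, q)) := by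
    intro x y
    constructor
    · intro h
      refine ⟨(hG1adj x y).mpr (Or.inl h), ?_⟩
      intro hs
      rw [Sym2.eq_iff] at hs
      rcases hs with ⟨h1, h2⟩ | ⟨h1, h2⟩
      · rw [h1, h2] at h
        exact hnadj h
      · rw [h1, h2] at h
        exact hnadj h.symm
    · rintro ⟨h1, h2⟩
      rcases (hG1adj x y).mp h1 with h | h
      · exact h
      · exact absurd h h2
  have hG''adj : ∀ i j : Fin n0, G₁.Adj (eqv.symm i) (eqv.symm j) ↔ G''.Adj i j := by
    intro i j
    have h1 : G''.Adj (e (eqv.symm i)) (e (eqv.symm j)) ↔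
        G₁.Adj (eqv.symm i) (eqv.symm j) := e.map_adj_iff
    have h2 : e (eqv.symm i) = i := by
      show eqv (eqv.symm i) = i
      exact Equiv.apply_symm_apply _ _
    have h3 : e (eqv.symm j) = j := by
      show eqv (eqv.symm j) = j
      exact Equiv.apply_symm_apply _ _
    rw [h2, h3] at h1
    exact h1.symm
  have hsym : ∀ i j : Fin n0,
      s(((eqv.symm i : {x : V // x ≠ w}) : V), ((eqv.symm j : {x : V // x ≠ w}) : V)) = s(p, q)
        ↔ s(i, j) = s(pu, qv) := by
    intro i j
    rw [Sym2.eq_iff, Sym2.eq_iff]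
    constructor
    · rintro (⟨h1, h2⟩ | ⟨h1, h2⟩)
      · exact Or.inl ⟨(hvaleq i p hp).mp h1, (hvaleq j q hq).mp h2⟩
      · exact Or.inr ⟨(hvaleq i q hq).mp h1, (hvaleq j p hp).mp h2⟩
    · rintro (⟨h1, h2⟩ | ⟨h1, h2⟩)
      · exact Or.inl ⟨(hvaleq i p hp).mpr h1, (hvaleq j q hq).mpr h2⟩
      · exact Or.inr ⟨(hvaleq i q hq).mpr h1, (hvaleq j p hp).mpr h2⟩
  have hkey1 : ∀ i j : Fin n0,
      G.Adj ((eqv.symm i : {x : V // x ≠ w}) : V) ((eqv.symm j : {x : V // x ≠ w}) : V)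
        ↔ (G''.Adj i j ∧ ¬ (s(i, j) = s(pu, qv))) := by
    intro i j
    rw [hGadj1, hG''adj]
    constructor
    · rintro ⟨h1, h2⟩
      exact ⟨h1, fun hs => h2 ((hsym i j).mpr hs)⟩
    · rintro ⟨h1, h2⟩
      exact ⟨h1, fun hs => h2 ((hsym i j).mp hs)⟩
  have hkey2 : ∀ i : Fin n0, G.Adj ((eqv.symm i : {x : V // x ≠ w}) : V) w ↔
      (i = pu ∨ i = qv ∨ i = rz) := by
    intro i
    constructor
    · intro h
      have : ((eqv.symm i : {x : V // x ≠ w}) : V) ∈ G.neighborSet w := h.symm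
      rw [hNeq] at this
      rcases this with h' | h' | h'
      · exact Or.inl ((hvaleq i p hp).mp h')
      · exact Or.inr (Or.inl ((hvaleq i q hq).mp h'))
      · exact Or.inr (Or.inr ((hvaleq i r hr).mp h'))
    · rintro (h' | h' | h')
      · rw [(hvaleq i p hp).mpr h']
        exact hwp.symm
      · rw [(hvaleq i q hq).mpr h']
        exact hwq.symm
      · rw [(hvaleq i r hr).mpr h']
        exact hwr.symm
  have hG1pq : G₁.Adj ⟨p, hp⟩ ⟨q, hq⟩ := by
    rw [hG1adj]
    exact Or.inr rfl
  have hG''pq : G''.Adj pu qv := by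
    have h1 := (hG''adj pu qv).mp
    rw [hpu, hqv, Equiv.symm_apply_apply, Equiv.symm_apply_apply] at h1
    exact h1 hG1pq
  have hne1 : rz ≠ pu := by
    intro h
    exact hpr (Subtype.ext_iff.mp (eqv.injective h)).symm
  have hne2 : rz ≠ qv := by
    intro h
    exact hqr (Subtype.ext_iff.mp (eqv.injective h)).symm
  have hlastne : ∀ j : Fin n0, (finCastSuccEmb n0) j ≠ Fin.last n0 :=
    fun j => (Fin.castSucc_lt_last j).ne
  refine ⟨G', ⟨fin_cover n0, fin_last_not_range n0, pu, qv, rz, hG''pq, hne1, hne2, ?_⟩, hiso⟩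
  intro x y
  show G.Adj (χ x) (χ y) ↔ _
  rcases fin_cover n0 x with ⟨i, rfl⟩ | rfl <;> rcases fin_cover n0 y with ⟨j, rfl⟩ | rfl
  · rw [hχcast, hχcast, hkey1]
    constructor
    · rintro ⟨h1, h2⟩
      exact Or.inl ⟨i, j, h1, h2, rfl, rfl⟩
    · rintro (⟨c, d, hcd, hs, hx, hy⟩ | ⟨hx, -⟩ | ⟨hy, -⟩)
      · rw [(finCastSuccEmb n0).injective hx, (finCastSuccEmb n0).injective hy]
        exact ⟨hcd, hs⟩
      · exact absurd hx (hlastne i)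
      · exact absurd hy (hlastne j)
  · rw [hχcast, hχlast, hkey2]
    constructor
    · intro h
      refine Or.inr (Or.inr ⟨rfl, ?_⟩)
      rcases h with h' | h' | h'
      · exact Or.inl (by rw [h'])
      · exact Or.inr (Or.inl (by rw [h']))
      · exact Or.inr (Or.inr (by rw [h']))
    · rintro (⟨c, d, hcd, hs, hx, hy⟩ | ⟨hx, -⟩ | ⟨-, (hx | hx | hx)⟩)
      · exact absurd hy.symm (hlastne d)
      · exact absurd hx (hlastne i)
      · exact Or.inl ((finCastSuccEmb n0).injective hx)
      · exact Or.inr (Or.inl ((finCastSuccEmb n0).injective hx))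
      · exact Or.inr (Or.inr ((finCastSuccEmb n0).injective hx))
  · rw [hχlast, hχcast]
    have hcomm : G.Adj w ((eqv.symm j : {x : V // x ≠ w}) : V) ↔
        G.Adj ((eqv.symm j : {x : V // x ≠ w}) : V) w := ⟨fun h => h.symm, fun h => h.symm⟩
    rw [hcomm, hkey2]
    constructor
    · intro h
      refine Or.inr (Or.inl ⟨rfl, ?_⟩)
      rcases h with h' | h' | h'
      · exact Or.inl (by rw [h'])
      · exact Or.inr (Or.inl (by rw [h']))
      · exact Or.inr (Or.inr (by rw [h']))
    · rintro (⟨c, d, hcd, hs, hx, hy⟩ | ⟨-, (hy | hy | hy)⟩ | ⟨hy, -⟩)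
      · exact absurd hx.symm (hlastne c)
      · exact Or.inl ((finCastSuccEmb n0).injective hy)
      · exact Or.inr (Or.inl ((finCastSuccEmb n0).injective hy))
      · exact Or.inr (Or.inr ((finCastSuccEmb n0).injective hy))
      · exact absurd hy (hlastne j)
  · rw [hχlast]
    constructor
    · intro h
      exact absurd rfl h.ne
    · rintro (⟨c, d, hcd, hs, hx, hy⟩ | ⟨-, (hy | hy | hy)⟩ | ⟨-, (hx | hx | hx)⟩)
      · exact absurd hx.symm (hlastne c)
      · exact absurd hy.symm (hlastne pu)
      · exact absurd hy.symm (hlastne qv)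
      · exact absurd hy.symm (hlastne rz)
      · exact absurd hx.symm (hlastne pu)
      · exact absurd hx.symm (hlastne qv)
      · exact absurd hx.symm (hlastne rz)

end Aux12
section Aux13

variable {V : Type} [Fintype V] [DecidableEq V]

lemma maxIndep3_addEdge {G : SimpleGraph V} (hMI : MaxIndep3 G) {w p q r : V}
    (hNeq : G.neighborSet w = {p, q, r}) (hpq : p ≠ q) (hqr : q ≠ r) (hpr : p ≠ r)
    (hnadj : ¬ G.Adj p q) (hp : p ≠ w) (hq : q ≠ w)
    (hgood : ∀ F : Set (Sym2 V), F ⊆ delE G w →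
        ((insert s(p, q) F).ncard : ℤ) ≤ 2 * (((eV (insert s(p, q) F)).ncard : ℤ)) - 3) :
    MaxIndep3 (delG G w ⊔ SimpleGraph.fromEdgeSet {s((⟨p, hp⟩ : {x : V // x ≠ w}), ⟨q, hq⟩)}) := by
  classical
  have hspG := (indep3_iff_sparse G).mp hMI.1
  set G₁ : SimpleGraph {x : V // x ≠ w} :=
    delG G w ⊔ SimpleGraph.fromEdgeSet {s((⟨p, hp⟩ : {x : V // x ≠ w}), ⟨q, hq⟩)} with hG₁
  have hp'q' : (⟨p, hp⟩ : {x : V // x ≠ w}) ≠ ⟨q, hq⟩ := fun h => hpq (congrArg Subtype.val h)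
  have hE₁ : G₁.edgeSet
      = insert s((⟨p, hp⟩ : {x : V // x ≠ w}), ⟨q, hq⟩) (delG G w).edgeSet := by
    rw [hG₁, SimpleGraph.edgeSet_sup, SimpleGraph.edgeSet_fromEdgeSet]
    have hdiag : ({s((⟨p, hp⟩ : {x : V // x ≠ w}), ⟨q, hq⟩)} : Set (Sym2 {x : V // x ≠ w}))
        \ {e | e.IsDiag} = {s((⟨p, hp⟩ : {x : V // x ≠ w}), ⟨q, hq⟩)} := by
      ext e
      constructor
      · rintro ⟨he, -⟩
        exact he
      · rintro rfl
        exact ⟨rfl, fun hd => hp'q' (Sym2.mk_isDiag_iff.mp hd)⟩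
    erw [hdiag]; rw [ Set.union_comm, ← Set.insert_eq]
  have hpqE₀ : s((⟨p, hp⟩ : {x : V // x ≠ w}), ⟨q, hq⟩) ∉ (delG G w).edgeSet := fun h => hnadj h
  constructor
  · rw [indep3_iff_sparse]
    intro F hF hne
    set vmap : {x : V // x ≠ w} → V := fun t => (t : V) with hvmap
    set F' : Set (Sym2 V) := Sym2.map vmap '' F with hF'
    have hinj : Function.Injective (Sym2.map vmap) := Sym2.map.injective Subtype.val_injective
    have hcard : F'.ncard = F.ncard := Set.ncard_image_of_injective _ hinj
    have heV : eV F' = vmap '' eV F := by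
      ext x; constructor
      · rintro ⟨e0, ⟨e1, he1, rfl⟩, hx⟩
        rcases Sym2.mem_map.mp hx with ⟨a, ha, rfl⟩
        exact ⟨a, ⟨e1, he1, ha⟩, rfl⟩
      · rintro ⟨a, ⟨e1, he1, ha⟩, rfl⟩
        exact ⟨Sym2.map _ e1, ⟨e1, he1, rfl⟩, Sym2.mem_map.mpr ⟨a, ha, rfl⟩⟩
    have himg : (vmap '' eV F).ncard = (eV F).ncard :=
      Set.ncard_image_of_injective _ Subtype.val_injective
    have hF'sub : F' ⊆ insert s(p, q) (delE G w) := by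
      rintro _ ⟨e0, he0, rfl⟩
      rw [hE₁] at hF
      rcases hF he0 with rfl | he0'
      · rw [Sym2.map_pair_eq]
        exact Or.inl rfl
      · right
        rw [delE_eq, ← delG_edgeSet_image G w]
        exact ⟨e0, he0', rfl⟩
    by_cases hmem : s(p, q) ∈ F'
    · have hsub2 : F' \ {s(p, q)} ⊆ delE G w := by
        rintro e ⟨heF, hnot⟩
        rcases hF'sub heF with rfl | h
        · exact absurd rfl hnot
        · exact h
      have hb := hgood (F' \ {s(p, q)}) hsub2
      rw [Set.insert_diff_singleton, Set.insert_eq_self.mpr hmem] at hb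
      rw [hcard, heV, himg] at hb
      exact hb
    · have hsub2 : F' ⊆ delE G w := by
        intro e he
        rcases hF'sub he with rfl | h
        · exact absurd he hmem
        · exact h
      have hdelE_sub : F' ⊆ G.edgeSet := fun e he => (hsub2 he).1
      have hb := hspG F' hdelE_sub (hne.image _)
      rw [hcard, heV, himg] at hb
      exact hb
  · -- gFreedom count
    have hE := edgeSet_ncard_of_maxIndep3 hMI
    have hdeg3 : (G.neighborSet w).ncard = 3 := by
      rw [hNeq]
      rw [Set.ncard_insert_of_notMem (by
        rintro (h | h)
        · exact hpq h
        · exact hpr h) (Set.toFinite _), Set.ncard_pair hqr]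
    have hincn : (G.incidenceSet w).ncard = 3 := by
      rw [incidenceSet_ncard, ← neighborSet_ncard, hdeg3]
    have h0 := delG_edgeSet_ncard G w
    rw [hincn] at h0
    have h1 : G₁.edgeSet.ncard = (delG G w).edgeSet.ncard + 1 := by
      rw [hE₁]
      exact Set.ncard_insert_of_notMem hpqE₀ (Set.toFinite _)
    have h2 := card_del (V := V) w
    rw [gFreedom, Set.ncard_univ, Nat.card_eq_fintype_card]
    have h3 : (G₁.edgeSet.ncard : ℤ) = ((delG G w).edgeSet.ncard : ℤ) + 1 := by exact_mod_cast h1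
    have h4 : ((delG G w).edgeSet.ncard : ℤ) + 3 = (G.edgeSet.ncard : ℤ) := by exact_mod_cast h0
    have h5 : (Fintype.card {x : V // x ≠ w} : ℤ) + 1 = (Fintype.card V : ℤ) := by
      exact_mod_cast h2
    omega

end Aux13
section Aux14

lemma maxIndep3_delG {V : Type} [Fintype V] {G : SimpleGraph V} (hMI : MaxIndep3 G)
    {w : V} (hdeg2 : (G.neighborSet w).ncard = 2) : MaxIndep3 (delG G w) := by
  classical
  constructor
  · exact (indep3_iff_sparse _).mpr (delG_sparse ((indep3_iff_sparse G).mp hMI.1) w)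
  · have hE := edgeSet_ncard_of_maxIndep3 hMI
    have hincn : (G.incidenceSet w).ncard = 2 := by
      rw [incidenceSet_ncard, ← neighborSet_ncard, hdeg2]
    have h1 := delG_edgeSet_ncard G w
    rw [hincn] at h1
    have h2 := card_del (V := V) w
    rw [gFreedom, Set.ncard_univ, Nat.card_eq_fintype_card]
    have h3 : ((delG G w).edgeSet.ncard : ℤ) + 2 = (G.edgeSet.ncard : ℤ) := by exact_mod_cast h1
    have h4 : (Fintype.card {x : V // x ≠ w} : ℤ) + 1 = (Fintype.card V : ℤ) := by
      exact_mod_cast h2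
    omega

lemma maxIndep3_derived : ∀ (N : ℕ) (V : Type) [Fintype V] (G : SimpleGraph V),
    Fintype.card V = N → MaxIndep3 G → Nonempty V →
    ∃ (n : ℕ) (G' : SimpleGraph (Fin n)),
      Derived (⊤ : SimpleGraph (Fin 2)) n G' ∧ Nonempty (G ≃g G') := by
  intro N
  induction N using Nat.strong_induction_on with
  | _ N IH =>
    intro V instV G hcard hMI hNe
    classical
    haveI := hNe
    have hconn := maxIndep3_connected hMI
    have hE := edgeSet_ncard_of_maxIndep3 hMI
    rw [hcard] at hE
    have hN2 : 2 ≤ N := by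
      have h0 : (0 : ℤ) ≤ (G.edgeSet.ncard : ℤ) := Int.ofNat_nonneg _
      omega
    by_cases hN2eq : N = 2
    · subst hN2eq
      have hE1 : G.edgeSet.ncard = 1 := by omega
      obtain ⟨e0, he0⟩ : G.edgeSet.Nonempty := Set.nonempty_of_ncard_ne_zero (by omega)
      have hGtop : G = ⊤ := by
        ext a b
        simp only [SimpleGraph.top_adj]
        constructor
        · exact fun h => h.ne
        · intro hab
          induction e0 with
          | _ c d =>
            have hcd : G.Adj c d := he0
            have hcdne : c ≠ d := hcd.ne
            have huniv : ∀ x : V, x = c ∨ x = d := by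
              intro x
              have hcard2 : ({c, d} : Finset V).card = 2 := by
                rw [Finset.card_insert_of_notMem (by simpa using hcdne),
                  Finset.card_singleton]
              have huniv2 : ({c, d} : Finset V) = Finset.univ :=
                Finset.eq_univ_of_card _ (by rw [hcard2, hcard])
              have hx : x ∈ ({c, d} : Finset V) := huniv2 ▸ Finset.mem_univ x
              simpa using hx
            rcases huniv a with rfl | rfl <;> rcases huniv b with rfl | rfl
            · exact absurd rfl hab
            · exact hcd
            · exact hcd.symm
            · exact absurd rfl hab
      refine ⟨2, ⊤, Derived.base, ?_⟩
      rw [hGtop]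
      exact ⟨SimpleGraph.Iso.completeGraph (Fintype.equivFinOfCardEq hcard)⟩
    · have hN3 : 3 ≤ N := by omega
      obtain ⟨w, hdeg⟩ := exists_low_degree hMI hconn (by omega)
      have hcard' : Fintype.card {x : V // x ≠ w} + 1 = N := by
        rw [← hcard]; exact card_del w
      have hlt : Fintype.card {x : V // x ≠ w} < N := by omega
      haveI hne' : Nonempty {x : V // x ≠ w} := by
        rw [← Fintype.card_pos_iff]; omega
      rcases hdeg with hdeg2 | hdeg3
      · -- degree 2
        obtain ⟨a, b, hab, hNeq⟩ := Set.ncard_eq_two.mp hdeg2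
        have hMI0 : MaxIndep3 (delG G w) := maxIndep3_delG hMI hdeg2
        obtain ⟨n0, G'', hder, ⟨e⟩⟩ :=
          IH _ hlt {x : V // x ≠ w} (delG G w) rfl hMI0 hne'
        obtain ⟨G', hrel, hiso⟩ := reduce_deg2 hNeq hab e
        exact ⟨n0 + 1, G', Derived.h1 hder hrel, hiso⟩
      · -- degree 3
        obtain ⟨u, v, z, huv, huz, hvz, hNeq⟩ := Set.ncard_eq_three.mp hdeg3
        have hspG := (indep3_iff_sparse G).mp hMI.1
        obtain ⟨p, q, r, hset, hpq, hqr, hpr, hnadj, hgood⟩ :=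
          exists_good_pair hspG hNeq huv huz hvz
        have hNeq' : G.neighborSet w = {p, q, r} := by rw [hNeq, ← hset]
        have hwp : G.Adj w p := by
          have : p ∈ G.neighborSet w := by rw [hNeq']; exact Or.inl rfl
          exact this
        have hwq : G.Adj w q := by
          have : q ∈ G.neighborSet w := by rw [hNeq']; exact Or.inr (Or.inl rfl)
          exact this
        have hwr : G.Adj w r := by
          have : r ∈ G.neighborSet w := by rw [hNeq']; exact Or.inr (Or.inr rfl)
          exact this
        have hp : p ≠ w := hwp.ne'
        have hq : q ≠ w := hwq.ne'
        have hr : r ≠ w := hwr.ne'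
        have hMI1 := maxIndep3_addEdge hMI hNeq' hpq hqr hpr hnadj hp hq hgood
        obtain ⟨n0, G'', hder, ⟨e⟩⟩ :=
          IH _ hlt {x : V // x ≠ w}
            (delG G w ⊔ SimpleGraph.fromEdgeSet {s((⟨p, hp⟩ : {x : V // x ≠ w}), ⟨q, hq⟩)})
            rfl hMI1 hne'
        obtain ⟨G', hrel, hiso⟩ := reduce_deg3 hNeq' hpq hqr hpr hnadj hp hq hr e
        exact ⟨n0 + 1, G', Derived.h2 hder hrel, hiso⟩

end Aux14
/-- A finite connected simple graph is maximally independent of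
type 3 if and only if it is obtained from the complete graph `K₂` by a finite
sequence of Henneberg 1 and Henneberg 2 moves. -/
theorem maxIndep3_iff_derived_from_K2 {V : Type} [Fintype V] (G : SimpleGraph V)
    (hconn : G.Connected) :
    MaxIndep3 G ↔
      ∃ (n : ℕ) (G' : SimpleGraph (Fin n)),
        Derived (⊤ : SimpleGraph (Fin 2)) n G' ∧ Nonempty (G ≃g G') := by
  constructor
  · intro hMI
    exact maxIndep3_derived (Fintype.card V) V G rfl hMI hconn.nonempty
  · rintro ⟨n, G', hder, ⟨e⟩⟩
    exact maxIndep3_of_iso e (derived_maxIndep3 hder)
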